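/- arXiv:1512.00703 — 9 statements merged into one kernel-verified Lean document; each statement's English description precedes it below -/
import Mathlib

section
/- Let E, F, G be Archimedean Riesz spaces and φ : E × F → G a positive bilinear map. If sequences (fₙ) in E and (gₙ) in F converge relatively uniformly to f and g respectively, then the sequence (φ(fₙ, gₙ)) converges relatively uniformly to φ(f, g). -/
/-- Relatively uniform convergence of a sequence in a Riesz space. -/
def RUConv {E : Type*} [AddCommGroup E] [Lattice E] [Module ℝ E]
    (f : ℕ → E) (l : E) : Prop :=
  ∃ v : E, ∀ ε : ℝ, 0 < ε → ∃ N : ℕ, ∀ n ≥ N, |f n - l| ≤ ε • v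

section Aux
variable {E F G : Type*}
    [AddCommGroup E] [Lattice E] [CovariantClass E E (· + ·) (· ≤ ·)] [Module ℝ E]
    [AddCommGroup F] [Lattice F] [CovariantClass F F (· + ·) (· ≤ ·)] [Module ℝ F]
    [AddCommGroup G] [Lattice G] [CovariantClass G G (· + ·) (· ≤ ·)] [Module ℝ G]
    (φ : E →ₗ[ℝ] F →ₗ[ℝ] G)

lemma bil_mono (hφpos : ∀ x : E, ∀ y : F, 0 ≤ x → 0 ≤ y → 0 ≤ φ x y)
    {x a : E} {y b : F} (hx : 0 ≤ x) (hxa : x ≤ a) (hy : 0 ≤ y)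
    (hyb : y ≤ b) : φ x y ≤ φ a b := by
  have hb : 0 ≤ b := hy.trans hyb
  have h1 : 0 ≤ φ (a - x) b := hφpos _ _ (sub_nonneg.2 hxa) hb
  have h2 : 0 ≤ φ x (b - y) := hφpos _ _ hx (sub_nonneg.2 hyb)
  have key : φ a b - φ x y = φ (a - x) b + φ x (b - y) := by
    simp only [map_sub, LinearMap.sub_apply]
    abel
  have h3 := add_nonneg h1 h2
  rw [← key] at h3
  exact sub_nonneg.1 h3

lemma bil_abs (hφpos : ∀ x : E, ∀ y : F, 0 ≤ x → 0 ≤ y → 0 ≤ φ x y)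
    (x : E) (y : F) : |φ x y| ≤ φ |x| |y| := by
  have hpp := hφpos _ _ (posPart_nonneg x) (posPart_nonneg y)
  have hpn := hφpos _ _ (posPart_nonneg x) (negPart_nonneg y)
  have hnp := hφpos _ _ (negPart_nonneg x) (posPart_nonneg y)
  have hnn := hφpos _ _ (negPart_nonneg x) (negPart_nonneg y)
  have key1 : ∀ (a b : E) (c d : F), φ (a + b) (c + d) - φ (a - b) (c - d)
      = (φ a d + φ b c) + (φ a d + φ b c) := by
    intro a b c d
    simp only [map_sub, map_add, LinearMap.sub_apply, LinearMap.add_apply]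
    abel
  have key2 : ∀ (a b : E) (c d : F), φ (a + b) (c + d) + φ (a - b) (c - d)
      = (φ a c + φ b d) + (φ a c + φ b d) := by
    intro a b c d
    simp only [map_sub, map_add, LinearMap.sub_apply, LinearMap.add_apply]
    abel
  have h1 := key1 (x⁺) (x⁻) (y⁺) (y⁻)
  have h2 := key2 (x⁺) (x⁻) (y⁺) (y⁻)
  rw [posPart_add_negPart, posPart_add_negPart, posPart_sub_negPart,
    posPart_sub_negPart] at h1 h2
  rw [abs_le']
  constructor
  · have h0 : 0 ≤ φ |x| |y| - φ x y := h1 ▸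
      add_nonneg (add_nonneg hpn hnp) (add_nonneg hpn hnp)
    exact sub_nonneg.1 h0
  · have h0 : 0 ≤ φ |x| |y| + φ x y := h2 ▸
      add_nonneg (add_nonneg hpp hnn) (add_nonneg hpp hnn)
    exact neg_le_iff_add_nonneg.2 h0
end Aux

set_option maxHeartbeats 1000000 in
/-- Positive bilinear maps between Archimedean Riesz spaces preserve relatively
uniform convergence of pairs of sequences. -/
theorem positive_bilinear_ru_continuous
    {E F G : Type*}
    [AddCommGroup E] [Lattice E] [CovariantClass E E (· + ·) (· ≤ ·)] [Module ℝ E]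
    [AddCommGroup F] [Lattice F] [CovariantClass F F (· + ·) (· ≤ ·)] [Module ℝ F]
    [AddCommGroup G] [Lattice G] [CovariantClass G G (· + ·) (· ≤ ·)] [Module ℝ G]
    (harchE : ∀ x y : E, (∀ n : ℕ, n • x ≤ y) → x ≤ 0)
    (harchF : ∀ x y : F, (∀ n : ℕ, n • x ≤ y) → x ≤ 0)
    (harchG : ∀ x y : G, (∀ n : ℕ, n • x ≤ y) → x ≤ 0)
    (φ : E →ₗ[ℝ] F →ₗ[ℝ] G)
    (hφpos : ∀ x : E, ∀ y : F, 0 ≤ x → 0 ≤ y → 0 ≤ φ x y)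
    (f : ℕ → E) (g : ℕ → F) (f₀ : E) (g₀ : F)
    (hf : RUConv f f₀) (hg : RUConv g g₀) :
    RUConv (fun n => φ (f n) (g n)) (φ f₀ g₀) := by
  obtain ⟨u, hu⟩ := hf
  obtain ⟨w, hw⟩ := hg
  obtain ⟨N₀, hN₀⟩ := hw 1 one_pos
  have hgbd : ∀ n ≥ N₀, |g n| ≤ |g₀| + w := by
    intro n hn
    have h := hN₀ n hn
    rw [one_smul] at h
    calc |g n| = |(g n - g₀) + g₀| := by rw [sub_add_cancel]
      _ ≤ |g n - g₀| + |g₀| := abs_add_le _ _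
      _ ≤ w + |g₀| := add_le_add_left h _
      _ = |g₀| + w := add_comm _ _
  refine ⟨φ u (|g₀| + w) + φ |f₀| w, fun ε hε => ?_⟩
  obtain ⟨N₁, hN₁⟩ := hu ε hε
  obtain ⟨N₂, hN₂⟩ := hw ε hε
  refine ⟨max N₁ (max N₂ N₀), fun n hn => ?_⟩
  have hn1 : n ≥ N₁ := le_trans (le_max_left _ _) hn
  have hn2 : n ≥ N₂ := le_trans (le_trans (le_max_left _ _) (le_max_right _ _)) hn
  have hn0 : n ≥ N₀ := le_trans (le_trans (le_max_right _ _) (le_max_right _ _)) hn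
  have decomp : φ (f n) (g n) - φ f₀ g₀ = φ (f n - f₀) (g n) + φ f₀ (g n - g₀) := by
    simp only [map_sub, LinearMap.sub_apply]
    abel
  calc |φ (f n) (g n) - φ f₀ g₀|
      = |φ (f n - f₀) (g n) + φ f₀ (g n - g₀)| := by rw [decomp]
    _ ≤ |φ (f n - f₀) (g n)| + |φ f₀ (g n - g₀)| := abs_add_le _ _
    _ ≤ φ |f n - f₀| |g n| + φ |f₀| |g n - g₀| :=
        add_le_add (bil_abs φ hφpos _ _) (bil_abs φ hφpos _ _)
    _ ≤ φ (ε • u) (|g₀| + w) + φ |f₀| (ε • w) :=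
        add_le_add
          (bil_mono φ hφpos (abs_nonneg _) (hN₁ n hn1) (abs_nonneg _) (hgbd n hn0))
          (bil_mono φ hφpos (abs_nonneg _) le_rfl (abs_nonneg _) (hN₂ n hn2))
    _ = ε • (φ u (|g₀| + w) + φ |f₀| w) := by
        simp only [map_smul, LinearMap.smul_apply, smul_add]
end

section
/- In a semiprime f-algebra A, for every positive element a one has 0 ≤ a² ≤ a + a³. -/
/-- In a semiprime Archimedean f-algebra, `0 ≤ a² ≤ a + a³` for every positive `a`. -/
theorem sq_le_self_add_cube
    {A : Type*} [Ring A] [Lattice A] [CovariantClass A A (· + ·) (· ≤ ·)]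
    (hmulpos : ∀ x y : A, 0 ≤ x → 0 ≤ y → 0 ≤ x * y)
    (hfalg : ∀ f g h : A, f ⊓ g = 0 → 0 ≤ h → (f * h) ⊓ g = 0 ∧ (h * f) ⊓ g = 0)
    (hsemiprime : ∀ a : A, (∃ n : ℕ, 0 < n ∧ a ^ n = 0) → a = 0)
    (harch : ∀ x y : A, (∀ n : ℕ, n • x ≤ y) → x ≤ 0)
    (a : A) (ha : 0 ≤ a) :
    0 ≤ a ^ 2 ∧ a ^ 2 ≤ a + a ^ 3 := by
  have ha2 : 0 ≤ a ^ 2 := by simpa [sq] using hmulpos a a ha ha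
  refine ⟨ha2, ?_⟩
  -- p and q are the positive and negative parts of a² − a
  set p : A := (a ^ 2 - a) ⊔ 0 with hp
  set q : A := (-(a ^ 2 - a)) ⊔ 0 with hq
  have hqp : q ⊓ p = 0 := by
    have := posPart_inf_negPart_eq_zero (a ^ 2 - a)
    rw [inf_comm] at this
    simpa [posPart_def, negPart_def, hp, hq] using this
  -- f-algebra property: (a * q) ⊓ p = 0
  have key : (a * q) ⊓ p = 0 := (hfalg q p a hqp ha).2
  -- a² − a − a³ ≤ p
  have h1 : a ^ 2 - a - a ^ 3 ≤ p := by
    have : a ^ 2 - a - a ^ 3 ≤ a ^ 2 - a := by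
      have h3 : (0:A) ≤ a ^ 3 := by
        have := hmulpos a (a ^ 2) ha ha2
        simpa [pow_succ, sq, mul_assoc] using this
      have := sub_le_sub_left h3 (a ^ 2 - a)
      simpa using this
    exact this.trans le_sup_left
  -- a² − a − a³ ≤ a * q
  have h2 : a ^ 2 - a - a ^ 3 ≤ a * q := by
    have hle : a - a ^ 2 ≤ q := by
      have : a - a ^ 2 ≤ (-(a ^ 2 - a)) := by simp
      exact this.trans le_sup_left
    have hdiff : 0 ≤ a * q - a * (a - a ^ 2) := by
      rw [← mul_sub]
      exact hmulpos a _ ha (sub_nonneg.mpr hle)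
    have h5 : a * (a - a ^ 2) ≤ a * q := sub_nonneg.mp hdiff
    have h6 : a * (a - a ^ 2) = a ^ 2 - a ^ 3 := by
      rw [mul_sub, ← sq, ← pow_succ']
    have h7 : a ^ 2 - a - a ^ 3 ≤ a ^ 2 - a ^ 3 := by
      have := sub_le_sub_right (sub_le_self (a ^ 2) ha) (a ^ 3)
      simpa [sub_sub] using this
    calc a ^ 2 - a - a ^ 3 ≤ a ^ 2 - a ^ 3 := h7
      _ = a * (a - a ^ 2) := h6.symm
      _ ≤ a * q := h5
  -- hence a² − a − a³ ≤ (a*q) ⊓ p = 0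
  have h8 : a ^ 2 - a - a ^ 3 ≤ 0 := by
    calc a ^ 2 - a - a ^ 3 ≤ (a * q) ⊓ p := le_inf h2 h1
      _ = 0 := key
  have : a ^ 2 - (a + a ^ 3) ≤ 0 := by rwa [sub_add_eq_sub_sub]
  exact sub_nonpos.mp this
end

section
/- In a semiprime f-algebra A, for all a, b ∈ A one has a⁺b⁺ = (ab)⁺ ∧ ((a + a³)⁺ + (b + b³)⁺). -/
section PosPartMulAux
set_option linter.unusedSectionVars false

variable {A : Type*} [Ring A] [Lattice A] [CovariantClass A A (· + ·) (· ≤ ·)]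

private theorem PPM.dj {f g : A} (h : f ⊓ g = 0) : g ⊓ f = 0 := by
  rw [inf_comm]; exact h

/-- `x ⊓ (y + z) ≤ (x ⊓ y) + (x ⊓ z)` for nonnegative elements. -/
private theorem PPM.inf_add_le {x y z : A} (hx : 0 ≤ x) (hy : 0 ≤ y) (hz : 0 ≤ z) :
    x ⊓ (y + z) ≤ x ⊓ y + (x ⊓ z) := by
  have h1 : x ⊓ y + (x ⊓ z) = ((x ⊓ y) + x) ⊓ ((x ⊓ y) + z) := add_inf x z (x ⊓ y)
  have h2 : (x ⊓ y) + x = (x + x) ⊓ (y + x) := inf_add x y x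
  have h3 : (x ⊓ y) + z = (x + z) ⊓ (y + z) := inf_add x y z
  rw [h1, h2, h3]
  refine le_inf (le_inf ?_ ?_) (le_inf ?_ ?_)
  · exact inf_le_left.trans (le_add_of_nonneg_left hx)
  · exact inf_le_left.trans (le_add_of_nonneg_left hy)
  · exact inf_le_left.trans (le_add_of_nonneg_right hz)
  · exact inf_le_right

/-- Disjointness is additive for nonnegative elements. -/
private theorem PPM.disjoint_add {x y z : A} (hx : 0 ≤ x) (hy : 0 ≤ y) (hz : 0 ≤ z)
    (h1 : x ⊓ y = 0) (h2 : x ⊓ z = 0) : x ⊓ (y + z) = 0 := by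
  refine le_antisymm ?_ (le_inf hx (add_nonneg hy hz))
  calc x ⊓ (y + z) ≤ x ⊓ y + (x ⊓ z) := PPM.inf_add_le hx hy hz
    _ = 0 := by rw [h1, h2, add_zero]

/-- Positive part of a difference of disjoint nonnegative elements. -/
private theorem PPM.posPart_of_disjoint {P N : A} (hPN : P ⊓ N = 0) :
    (P - N) ⊔ 0 = P := by
  have h1 : ((P - N) ⊔ 0) + N = P ⊔ N := by
    rw [sup_add, sub_add_cancel, zero_add]
  have h2 : P ⊔ N = P + N := by
    have h := inf_add_sup P N
    rw [hPN, zero_add] at h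
    exact h
  have h3 := h1.trans h2
  exact add_right_cancel h3

private theorem PPM.mul_le_mul_left (hmulpos : ∀ x y : A, 0 ≤ x → 0 ≤ y → 0 ≤ x * y)
    {x y c : A} (h : x ≤ y) (hc : 0 ≤ c) : c * x ≤ c * y := by
  have h0 : 0 ≤ c * (y - x) := hmulpos _ _ hc (sub_nonneg.2 h)
  rw [mul_sub] at h0
  exact sub_nonneg.1 h0

private theorem PPM.mul_le_mul_right (hmulpos : ∀ x y : A, 0 ≤ x → 0 ≤ y → 0 ≤ x * y)
    {x y c : A} (h : x ≤ y) (hc : 0 ≤ c) : x * c ≤ y * c := by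
  have h0 : 0 ≤ (y - x) * c := hmulpos _ _ (sub_nonneg.2 h) hc
  rw [sub_mul] at h0
  exact sub_nonneg.1 h0

/-- Key inequality: for `0 ≤ t`, one has `t*t ≤ t + t*t*t`. -/
private theorem PPM.sq_le (hmulpos : ∀ x y : A, 0 ≤ x → 0 ≤ y → 0 ≤ x * y)
    (hfalg : ∀ f g h : A, f ⊓ g = 0 → 0 ≤ h → (f * h) ⊓ g = 0 ∧ (h * f) ⊓ g = 0)
    {t : A} (ht : 0 ≤ t) : t * t ≤ t + t * t * t := by
  set u : A := (t * t - t) ⊔ 0 with hu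
  set v : A := (t - t * t) ⊔ 0 with hv
  have hu0 : 0 ≤ u := le_sup_right
  have hv0 : 0 ≤ v := le_sup_right
  have huv : u - v = t * t - t := by
    have := posPart_sub_negPart (t * t - t)
    rwa [posPart_def, negPart_def, neg_sub] at this
  have hdisj : u ⊓ v = 0 := by
    have := posPart_inf_negPart_eq_zero (t * t - t)
    rwa [posPart_def, negPart_def, neg_sub] at this
  have htv : (t * v) ⊓ u = 0 := (hfalg v u t (PPM.dj hdisj) ht).2
  have hm : (t * t - t) ⊓ (t * t - t * t * t) ≤ u ⊓ (t * v) := by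
    refine le_inf ?_ ?_
    · refine inf_le_left.trans ?_
      rw [← huv]
      exact sub_le_self u hv0
    · refine inf_le_right.trans ?_
      have hvu : v - u = t - t * t := by rw [← neg_sub u v, huv, neg_sub]
      have : t * t - t * t * t = t * v - t * u := by
        rw [← mul_sub, hvu, mul_sub, mul_assoc]
      rw [this]
      exact sub_le_self (t * v) (hmulpos t u ht hu0)
  have hm0 : (t * t - t) ⊓ (t * t - t * t * t) ≤ 0 := by
    rw [inf_comm] at htv
    calc (t * t - t) ⊓ (t * t - t * t * t) ≤ u ⊓ (t * v) := hm
      _ = 0 := htv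
  have hsub : t * t - (t ⊔ (t * t * t)) ≤ 0 := by
    rw [sub_sup]
    exact hm0
  have h1 : t * t ≤ t ⊔ (t * t * t) := by
    have := sub_nonpos.1 hsub
    exact this
  refine h1.trans (sup_le ?_ ?_)
  · exact le_add_of_nonneg_right (hmulpos _ _ (hmulpos t t ht ht) ht)
  · exact le_add_of_nonneg_left ht

end PosPartMulAux

/-- In a semiprime Archimedean f-algebra,
`a⁺b⁺ = (ab)⁺ ∧ ((a + a³)⁺ + (b + b³)⁺)`. -/
theorem posPart_mul_posPart_eq
    {A : Type*} [Ring A] [Lattice A] [CovariantClass A A (· + ·) (· ≤ ·)]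
    (hmulpos : ∀ x y : A, 0 ≤ x → 0 ≤ y → 0 ≤ x * y)
    (hfalg : ∀ f g h : A, f ⊓ g = 0 → 0 ≤ h → (f * h) ⊓ g = 0 ∧ (h * f) ⊓ g = 0)
    (hsemiprime : ∀ a : A, (∃ n : ℕ, 0 < n ∧ a ^ n = 0) → a = 0)
    (harch : ∀ x y : A, (∀ n : ℕ, n • x ≤ y) → x ≤ 0)
    (a b : A) :
    (a ⊔ 0) * (b ⊔ 0) = ((a * b) ⊔ 0) ⊓ (((a + a ^ 3) ⊔ 0) + ((b + b ^ 3) ⊔ 0)) := by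
  have pow3 : ∀ x : A, x ^ 3 = x * x * x := fun x => by
    rw [pow_succ, pow_succ, pow_one]
  set p : A := a ⊔ 0 with hpdef
  set q : A := (-a) ⊔ 0 with hqdef
  set r : A := b ⊔ 0 with hrdef
  set s : A := (-b) ⊔ 0 with hsdef
  have hp : 0 ≤ p := le_sup_right
  have hq : 0 ≤ q := le_sup_right
  have hr : 0 ≤ r := le_sup_right
  have hs : 0 ≤ s := le_sup_right
  have ha : a = p - q := by
    have := posPart_sub_negPart a
    rw [posPart_def, negPart_def] at this
    exact this.symm
  have hb : b = r - s := by
    have := posPart_sub_negPart b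
    rw [posPart_def, negPart_def] at this
    exact this.symm
  have hpq : p ⊓ q = 0 := by
    have := posPart_inf_negPart_eq_zero a
    rwa [posPart_def, negPart_def] at this
  have hrs : r ⊓ s = 0 := by
    have := posPart_inf_negPart_eq_zero b
    rwa [posPart_def, negPart_def] at this
  -- products of complementary parts vanish
  have hmul0 : ∀ x y : A, 0 ≤ x → 0 ≤ y → x ⊓ y = 0 → x * y = 0 := by
    intro x y hx hy hxy
    have h1 : (x * y) ⊓ y = 0 := (hfalg x y y hxy hy).1
    have h2 : (x * y) ⊓ (x * y) = 0 := (hfalg y (x * y) x (PPM.dj h1) hx).2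
    rwa [inf_idem] at h2
  have hpq0 : p * q = 0 := hmul0 p q hp hq hpq
  have hqp0 : q * p = 0 := hmul0 q p hq hp (PPM.dj hpq)
  have hrs0 : r * s = 0 := hmul0 r s hr hs hrs
  have hsr0 : s * r = 0 := hmul0 s r hs hr (PPM.dj hrs)
  -- Step 1 : (a*b)⁺ = p*r + q*s
  have hab : a * b = (p * r + q * s) - (p * s + q * r) := by
    rw [ha, hb]; noncomm_ring
  -- disjointness of the four products
  have d1 : (p * r) ⊓ (p * s) = 0 := by
    have h1 : (p * r) ⊓ s = 0 := (hfalg r s p hrs hp).2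
    exact PPM.dj (hfalg s (p * r) p (PPM.dj h1) hp).2
  have d2 : (p * r) ⊓ (q * r) = 0 := by
    have h1 : (p * r) ⊓ q = 0 := (hfalg p q r hpq hr).1
    exact PPM.dj (hfalg q (p * r) r (PPM.dj h1) hr).1
  have d3 : (q * s) ⊓ (p * s) = 0 := by
    have h1 : (q * s) ⊓ p = 0 := (hfalg q p s (PPM.dj hpq) hs).1
    exact PPM.dj (hfalg p (q * s) s (PPM.dj h1) hs).1
  have d4 : (q * s) ⊓ (q * r) = 0 := by
    have h1 : (q * s) ⊓ r = 0 := (hfalg s r q (PPM.dj hrs) hq).2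
    exact PPM.dj (hfalg r (q * s) q (PPM.dj h1) hq).2
  have hPRpos : 0 ≤ p * r := hmulpos p r hp hr
  have hQSpos : 0 ≤ q * s := hmulpos q s hq hs
  have hPSpos : 0 ≤ p * s := hmulpos p s hp hs
  have hQRpos : 0 ≤ q * r := hmulpos q r hq hr
  have hPN : (p * r + q * s) ⊓ (p * s + q * r) = 0 := by
    have h1 : (p * r) ⊓ (p * s + q * r) = 0 :=
      PPM.disjoint_add hPRpos hPSpos hQRpos d1 d2
    have h2 : (q * s) ⊓ (p * s + q * r) = 0 :=
      PPM.disjoint_add hQSpos hPSpos hQRpos d3 d4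
    exact PPM.dj (PPM.disjoint_add (add_nonneg hPSpos hQRpos) hPRpos hQSpos
      (PPM.dj h1) (PPM.dj h2))
  have habP : (a * b) ⊔ 0 = p * r + q * s := by
    rw [hab]; exact PPM.posPart_of_disjoint hPN
  -- Step 2 : (a + a^3)⁺ = p + p^3   (and similarly for b)
  have cube : ∀ x y : A, 0 ≤ x → 0 ≤ y → x * y = 0 → y * x = 0 →
      (x - y) * (x - y) * (x - y) = x * x * x - y * y * y := by
    intro x y hx hy hxy hyx
    have expand : (x - y) * (x - y) * (x - y) =
        x * x * x - y * y * y
        - x * (x * y) - (x * y) * x + (x * y) * y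
        - (y * x) * x + (y * x) * y + y * (y * x) := by
      noncomm_ring
    rw [expand, hxy, hyx]
    simp
  have posPart_poly : ∀ x : A, ((x + x ^ 3) ⊔ 0) =
      ((x ⊔ 0) + (x ⊔ 0) * (x ⊔ 0) * (x ⊔ 0)) := by
    intro x
    set u : A := x ⊔ 0 with hudef
    set v : A := (-x) ⊔ 0 with hvdef
    have hu : 0 ≤ u := le_sup_right
    have hv : 0 ≤ v := le_sup_right
    have hx : x = u - v := by
      have := posPart_sub_negPart x
      rw [posPart_def, negPart_def] at this
      exact this.symm
    have huv : u ⊓ v = 0 := by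
      have := posPart_inf_negPart_eq_zero x
      rwa [posPart_def, negPart_def] at this
    have huv0 : u * v = 0 := hmul0 u v hu hv huv
    have hvu0 : v * u = 0 := hmul0 v u hv hu (PPM.dj huv)
    have hx3 : x + x ^ 3 = (u + u * u * u) - (v + v * v * v) := by
      rw [pow3, hx, cube u v hu hv huv0 hvu0]
      abel
    -- disjointness of u + u³ and v + v³
    have hu3 : ((u * u) * u) ⊓ v = 0 := by
      have h1 : (u * u) ⊓ v = 0 := (hfalg u v u huv hu).2
      exact (hfalg (u * u) v u h1 hu).1
    have hud : u ⊓ (v + v * v * v) = 0 := by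
      have hv3 : (v * (v * v)) ⊓ u = 0 := by
        have h1 : (v * v) ⊓ u = 0 := (hfalg v u v (PPM.dj huv) hv).2
        exact (hfalg (v * v) u v h1 hv).2
      refine PPM.disjoint_add hu hv (hmulpos _ _ (hmulpos v v hv hv) hv) huv ?_
      rw [← mul_assoc] at hv3
      exact PPM.dj hv3
    have hu3d : (u * u * u) ⊓ (v + v * v * v) = 0 := by
      have h1 : (u * u * u) ⊓ v = 0 := hu3
      have h2 : (u * u * u) ⊓ (v * v * v) = 0 := by
        have ha1 : (v * v) ⊓ (u * u * u) = 0 :=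
          (hfalg v (u * u * u) v (PPM.dj h1) hv).2
        have ha2 : (v * v * v) ⊓ (u * u * u) = 0 :=
          (hfalg (v * v) (u * u * u) v ha1 hv).1
        exact PPM.dj ha2
      exact PPM.disjoint_add (hmulpos _ _ (hmulpos u u hu hu) hu) hv
        (hmulpos _ _ (hmulpos v v hv hv) hv) h1 h2
    have hdisj2 : (u + u * u * u) ⊓ (v + v * v * v) = 0 := by
      refine PPM.dj (PPM.disjoint_add
        (add_nonneg hv (hmulpos _ _ (hmulpos v v hv hv) hv)) hu
        (hmulpos _ _ (hmulpos u u hu hu) hu) (PPM.dj hud) (PPM.dj hu3d))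
    rw [hx3]
    exact PPM.posPart_of_disjoint hdisj2
  -- Step 3 : key inequality  p * r ≤ (p + p³) + (r + r³)
  have key : ∀ x y : A, 0 ≤ x → 0 ≤ y →
      x * y ≤ (x + x * x * x) + (y + y * y * y) := by
    intro x y hx hy
    set w : A := x ⊔ y with hwdef
    have hw : 0 ≤ w := hx.trans le_sup_left
    have hxw : x ≤ w := le_sup_left
    have hyw : y ≤ w := le_sup_right
    have h1 : x * y ≤ w * w :=
      (PPM.mul_le_mul_left hmulpos hyw hx).trans
        (PPM.mul_le_mul_right hmulpos hxw hw)
    have h2 : w * w ≤ w + w * w * w := PPM.sq_le hmulpos hfalg hw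
    -- cube bound : w*w*w ≤ x*x*x + y*y*y
    set d : A := (x - y) ⊔ 0 with hddef
    set e : A := (y - x) ⊔ 0 with hedef
    have hd : 0 ≤ d := le_sup_right
    have he : 0 ≤ e := le_sup_right
    have hde : d ⊓ e = 0 := by
      have := posPart_inf_negPart_eq_zero (x - y)
      rwa [posPart_def, negPart_def, neg_sub] at this
    have hwx : w = x + e := by
      have : e + x = y ⊔ x := by rw [hedef, sup_add, sub_add_cancel, zero_add]
      rw [hwdef, sup_comm, ← this, add_comm]
    have hwy : w = y + d := by
      have : d + y = x ⊔ y := by rw [hddef, sup_add, sub_add_cancel, zero_add]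
      rw [hwdef, ← this, add_comm]
    have hww : 0 ≤ w * w := hmulpos w w hw hw
    have decompx : w * w * w - x * x * x =
        e * (w * w) + (x * (e * w) + x * (x * e)) := by
      rw [hwx]; noncomm_ring
    have decompy : w * w * w - y * y * y =
        d * (w * w) + (y * (d * w) + y * (y * d)) := by
      rw [hwy]; noncomm_ring
    -- each term on the x-side is disjoint from d
    have tx1 : (e * (w * w)) ⊓ d = 0 := (hfalg e d (w * w) (PPM.dj hde) hww).1
    have tx2 : (x * (e * w)) ⊓ d = 0 := by
      have h0 : (e * w) ⊓ d = 0 := (hfalg e d w (PPM.dj hde) hw).1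
      exact (hfalg (e * w) d x h0 hx).2
    have tx3 : (x * (x * e)) ⊓ d = 0 := by
      have h0 : (x * e) ⊓ d = 0 := (hfalg e d x (PPM.dj hde) hx).2
      exact (hfalg (x * e) d x h0 hx).2
    have pos1 : 0 ≤ e * (w * w) := hmulpos _ _ he hww
    have pos2 : 0 ≤ x * (e * w) := hmulpos _ _ hx (hmulpos _ _ he hw)
    have pos3 : 0 ≤ x * (x * e) := hmulpos _ _ hx (hmulpos _ _ hx he)
    set X : A := e * (w * w) + (x * (e * w) + x * (x * e)) with hXdef
    have hXpos : 0 ≤ X := add_nonneg pos1 (add_nonneg pos2 pos3)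
    have hXd : X ⊓ d = 0 :=
      PPM.dj (PPM.disjoint_add hd pos1 (add_nonneg pos2 pos3) (PPM.dj tx1)
        (PPM.disjoint_add hd pos2 pos3 (PPM.dj tx2) (PPM.dj tx3)))
    -- each term on the y-side is disjoint from X
    have ty1 : (d * (w * w)) ⊓ X = 0 := (hfalg d X (w * w) (PPM.dj hXd) hww).1
    have ty2 : (y * (d * w)) ⊓ X = 0 := by
      have h0 : (d * w) ⊓ X = 0 := (hfalg d X w (PPM.dj hXd) hw).1
      exact (hfalg (d * w) X y h0 hy).2
    have ty3 : (y * (y * d)) ⊓ X = 0 := by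
      have h0 : (y * d) ⊓ X = 0 := (hfalg d X y (PPM.dj hXd) hy).2
      exact (hfalg (y * d) X y h0 hy).2
    have posy1 : 0 ≤ d * (w * w) := hmulpos _ _ hd hww
    have posy2 : 0 ≤ y * (d * w) := hmulpos _ _ hy (hmulpos _ _ hd hw)
    have posy3 : 0 ≤ y * (y * d) := hmulpos _ _ hy (hmulpos _ _ hy hd)
    have hXY : X ⊓ (d * (w * w) + (y * (d * w) + y * (y * d))) = 0 :=
      PPM.disjoint_add hXpos posy1 (add_nonneg posy2 posy3) (PPM.dj ty1)
        (PPM.disjoint_add hXpos posy2 posy3 (PPM.dj ty2) (PPM.dj ty3))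
    have hcube : w * w * w ≤ x * x * x + y * y * y := by
      have hsub : w * w * w - ((x * x * x) ⊔ (y * y * y)) = 0 := by
        rw [sub_sup, decompx, decompy]
        exact hXY
      have : w * w * w = (x * x * x) ⊔ (y * y * y) := by
        have := sub_eq_zero.1 hsub
        exact this
      rw [this]
      exact sup_le (le_add_of_nonneg_right (hmulpos _ _ (hmulpos y y hy hy) hy))
        (le_add_of_nonneg_left (hmulpos _ _ (hmulpos x x hx hx) hx))
    have hwxy : w ≤ x + y :=
      sup_le (le_add_of_nonneg_right hy) (le_add_of_nonneg_left hx)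
    calc x * y ≤ w + w * w * w := h1.trans h2
      _ ≤ (x + y) + (x * x * x + y * y * y) := add_le_add hwxy hcube
      _ = (x + x * x * x) + (y + y * y * y) := by abel
  -- Step 4 : q*s is disjoint from R := (p + p³) + (r + r³)
  have hpppos : 0 ≤ p * p * p := hmulpos _ _ (hmulpos p p hp hp) hp
  have hrrpos : 0 ≤ r * r * r := hmulpos _ _ (hmulpos r r hr hr) hr
  have hQR : (q * s) ⊓ ((p + p * p * p) + (r + r * r * r)) = 0 := by
    have e1 : (q * s) ⊓ p = 0 := (hfalg q p s (PPM.dj hpq) hs).1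
    have e2 : (q * s) ⊓ (p * p * p) = 0 := by
      have a1 : (p * p) ⊓ (q * s) = 0 := (hfalg p (q * s) p (PPM.dj e1) hp).1
      exact PPM.dj (hfalg (p * p) (q * s) p a1 hp).1
    have e3 : (q * s) ⊓ r = 0 := (hfalg s r q (PPM.dj hrs) hq).2
    have e4 : (q * s) ⊓ (r * r * r) = 0 := by
      have a1 : (r * r) ⊓ (q * s) = 0 := (hfalg r (q * s) r (PPM.dj e3) hr).1
      exact PPM.dj (hfalg (r * r) (q * s) r a1 hr).1
    exact PPM.disjoint_add hQSpos (add_nonneg hp hpppos) (add_nonneg hr hrrpos)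
      (PPM.disjoint_add hQSpos hp hpppos e1 e2)
      (PPM.disjoint_add hQSpos hr hrrpos e3 e4)
  -- Step 5 : conclusion
  have hPleR : p * r ≤ (p + p * p * p) + (r + r * r * r) := key p r hp hr
  rw [habP, posPart_poly a, posPart_poly b, ← hpdef, ← hrdef]
  refine le_antisymm (le_inf (le_add_of_nonneg_right hQSpos) hPleR) ?_
  calc (p * r + q * s) ⊓ ((p + p * p * p) + (r + r * r * r))
      ≤ (p * r + q * s) ⊓ (p * r + ((p + p * p * p) + (r + r * r * r))) :=
        inf_le_inf_left _ (le_add_of_nonneg_left hPRpos)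
    _ = p * r + ((q * s) ⊓ ((p + p * p * p) + (r + r * r * r))) :=
        (add_inf _ _ _).symm
    _ = p * r := by rw [hQR, add_zero]
end

section
/- Let F be a vector subspace of a Riesz space E. Define L₁ = F and Lₙ₊₁ to be the vector subspace generated by Lₙ ∪ |Lₙ|, where |D| = {|x| : x ∈ D}. Then the Riesz subspace generated by F (the smallest Riesz subspace of E containing F) equals the union ⋃ₙ Lₙ. -/
/-- The Riesz subspace generated by a vector subspace `F` of a Riesz space `E`
is the union of the increasing sequence of subspaces `L₁ = F`,
`Lₙ₊₁ = span (Lₙ ∪ |Lₙ|)`. -/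
theorem rieszSubspace_generated_eq_iUnion
    {E : Type*} [AddCommGroup E] [Lattice E]
    [CovariantClass E E (· + ·) (· ≤ ·)] [Module ℝ E]
    (F : Submodule ℝ E)
    (L : ℕ → Submodule ℝ E)
    (hL0 : L 0 = F)
    (hLsucc : ∀ n : ℕ,
      L (n + 1) = Submodule.span ℝ ((L n : Set E) ∪ ((fun x => |x|) '' (L n : Set E)))) :
    (↑(sInf {S : Submodule ℝ E | F ≤ S ∧ ∀ x ∈ S, |x| ∈ S}) : Set E)
      = ⋃ n : ℕ, (L n : Set E) := by
  have mono : Monotone L := monotone_nat_of_le_succ fun n => by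
    rw [hLsucc n]
    conv_lhs => rw [← Submodule.span_eq (L n)]
    exact Submodule.span_mono Set.subset_union_left
  set O : ℕ →o Submodule ℝ E := ⟨L, mono⟩
  have hIabs : ∀ x ∈ sInf {S : Submodule ℝ E | F ≤ S ∧ ∀ x ∈ S, |x| ∈ S},
      |x| ∈ sInf {S : Submodule ℝ E | F ≤ S ∧ ∀ x ∈ S, |x| ∈ S} := by
    intro x hx
    rw [Submodule.mem_sInf] at hx ⊢
    exact fun S hS => hS.2 x (hx S hS)
  have h1 : (⨆ n, L n) ≤ sInf {S : Submodule ℝ E | F ≤ S ∧ ∀ x ∈ S, |x| ∈ S} := by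
    refine iSup_le fun n => ?_
    induction n with
    | zero => exact hL0 ▸ fun S hS => Submodule.mem_sInf.mpr fun T hT => hT.1 hS
    | succ n ih =>
      rw [hLsucc n]
      refine Submodule.span_le.mpr (Set.union_subset ih ?_)
      rintro _ ⟨y, hy, rfl⟩
      exact hIabs y (ih hy)
  have h2 : sInf {S : Submodule ℝ E | F ≤ S ∧ ∀ x ∈ S, |x| ∈ S} ≤ ⨆ n, L n := by
    refine sInf_le ⟨hL0 ▸ le_iSup L 0, fun x hx => ?_⟩
    obtain ⟨n, hn⟩ := (Submodule.mem_iSup_of_chain O x).mp hx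
    refine (Submodule.mem_iSup_of_chain O |x|).mpr ⟨n + 1, ?_⟩
    show |x| ∈ L (n + 1)
    rw [hLsucc n]
    exact Submodule.subset_span (Or.inr ⟨x, hn, rfl⟩)
  rw [le_antisymm h2 h1]
  exact Submodule.coe_iSup_of_chain O
end

section
/- Let E and F be vector spaces and φ, ψ : E × F → ℝ bilinear functionals such that the zero-set of φ is contained in the zero-set of ψ (i.e., φ(x,y) = 0 implies ψ(x,y) = 0). Then there exists λ ∈ ℝ such that ψ = λ·φ. -/
/-- A linear functional vanishing on the kernel of another is a scalar multiple of it. -/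
lemma aux_functional {F : Type*} [AddCommGroup F] [Module ℝ F]
    (f g : F →ₗ[ℝ] ℝ) (h : ∀ y, f y = 0 → g y = 0) :
    ∃ t : ℝ, ∀ y, g y = t * f y := by
  by_cases hf : ∀ y, f y = 0
  · exact ⟨0, fun y => by simp [h y (hf y)]⟩
  · push_neg at hf
    obtain ⟨y₀, hy₀⟩ := hf
    refine ⟨g y₀ / f y₀, fun y => ?_⟩
    have hz : f (y - (f y / f y₀) • y₀) = 0 := by
      simp [map_sub, map_smul]
      field_simp; simp
    have := h _ hz
    simp [map_sub, map_smul] at this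
    have : g y = (f y / f y₀) * g y₀ := by linarith [this]
    rw [this]; field_simp

/-- If the zero-set of a bilinear functional `φ` is contained in the zero-set of
a bilinear functional `ψ`, then `ψ` is a scalar multiple of `φ`. -/
theorem bilinear_zero_set_subset
    {E F : Type*} [AddCommGroup E] [Module ℝ E] [AddCommGroup F] [Module ℝ F]
    (φ ψ : E →ₗ[ℝ] F →ₗ[ℝ] ℝ)
    (h : ∀ x : E, ∀ y : F, φ x y = 0 → ψ x y = 0) :
    ∃ lam : ℝ, ∀ x : E, ∀ y : F, ψ x y = lam * φ x y := by
  -- choose for each x a scalar c x with ψ x = c x • φ x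
  have hc : ∀ x : E, ∃ t : ℝ, ∀ y, ψ x y = t * φ x y := fun x =>
    aux_functional (φ x) (ψ x) (h x)
  choose c hcspec using hc
  by_cases htriv : ∀ x y, φ x y = 0
  · exact ⟨0, fun x y => by simp [h x y (htriv x y)]⟩
  · push_neg at htriv
    obtain ⟨x₀, y₀, hxy₀⟩ := htriv
    have hx₀ : ∃ y, φ x₀ y ≠ 0 := ⟨y₀, hxy₀⟩
    refine ⟨c x₀, fun x y => ?_⟩
    -- suffices to show (c x - c x₀) * φ x y = 0 when φ x y ≠ 0, i.e. c x = c x₀ then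
    by_cases hx : ∀ y, φ x y = 0
    · simp [h x y (hx y), hx y]
    · push_neg at hx
      -- show c x = c x₀
      suffices hccx : c x = c x₀ by rw [hcspec x y, hccx]
      by_cases hdep : ∃ t : ℝ, ∀ y, φ x y = t * φ x₀ y
      · -- dependent case: φ (x - t x₀) = 0, so ψ x = t ψ x₀
        obtain ⟨t, ht⟩ := hdep
        have hz : ∀ y, φ (x - t • x₀) y = 0 := by
          intro y
          simp only [map_sub, LinearMap.sub_apply, map_smul, LinearMap.smul_apply,
            smul_eq_mul, ht y]
          ring
        have hpsi : ∀ y, ψ x y = t * ψ x₀ y := by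
          intro y
          have := h _ y (hz y)
          simp [map_sub] at this
          linarith
        -- ψ x y = t * c x₀ * φ x₀ y = c x₀ * φ x y, and ψ x y = c x * φ x y
        obtain ⟨y₁, hy₁⟩ := hx
        have e1 : c x * φ x y₁ = t * (c x₀ * φ x₀ y₁) := by
          rw [← hcspec x y₁, ← hcspec x₀ y₁, hpsi y₁]
        rw [ht y₁] at e1 hy₁
        have ht0 : t ≠ 0 := by intro h0; rw [h0] at hy₁; simp at hy₁
        have hφ0 : φ x₀ y₁ ≠ 0 := by intro h0; rw [h0] at hy₁; simp at hy₁
        rcases mul_eq_mul_right_iff.mp (by linarith [e1] : c x * (t * (φ x₀) y₁) = c x₀ * (t * (φ x₀) y₁)) with h' | h'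
        · exact h'
        · exact absurd h' (mul_ne_zero ht0 hφ0)
      · -- independent case: consider x + x₀
        push_neg at hdep
        have key : ∀ y, (c (x + x₀) - c x) * φ x y + (c (x + x₀) - c x₀) * φ x₀ y = 0 := by
          intro y
          have e1 := hcspec (x + x₀) y
          have e2 := hcspec x y
          have e3 := hcspec x₀ y
          simp [map_add] at e1
          nlinarith [e1, e2, e3]
        have hα : c (x + x₀) - c x = 0 := by
          by_contra hα
          obtain ⟨y', hy'⟩ := hdep (-(c (x + x₀) - c x₀) / (c (x + x₀) - c x))
          apply hy'
          have := key y'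
          field_simp
          linarith [this]
        have hβ : c (x + x₀) - c x₀ = 0 := by
          obtain ⟨y₂, hy₂⟩ := hx₀
          have := key y₂
          rw [hα] at this
          simp at this
          rcases this with h' | h'
          · exact h'
          · exact absurd h' hy₂
        linarith
end

section
/- Let A₁ and A₂ be Archimedean f-algebras with unit elements e₁ and e₂, and let T : A₁ × A₂ → ℝ be a Riesz bimorphism with T(e₁, e₂) = 1. Then T is multiplicative: T(a₁x₁, a₂x₂) = T(a₁, a₂)·T(x₁, x₂) for all aᵢ, xᵢ ∈ Aᵢ. -/
section Helpers

variable {A : Type*} [Ring A] [Lattice A]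
  [CovariantClass A A (· + ·) (· ≤ ·)] [Module ℝ A]

private lemma fa_disj_mul_zero
    (falg : ∀ f g h : A, f ⊓ g = 0 → 0 ≤ h → (f * h) ⊓ g = 0 ∧ (h * f) ⊓ g = 0)
    {x y : A} (hx : 0 ≤ x) (hy : 0 ≤ y) (hxy : x ⊓ y = 0) : x * y = 0 := by
  have h1 : (x * y) ⊓ y = 0 := (falg x y y hxy hy).1
  have h2 := (falg y (x * y) x (by rw [inf_comm]; exact h1) hx).2
  simpa using h2

private lemma fa_one_nonneg
    (mulpos : ∀ x y : A, 0 ≤ x → 0 ≤ y → 0 ≤ x * y)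
    (falg : ∀ f g h : A, f ⊓ g = 0 → 0 ≤ h → (f * h) ⊓ g = 0 ∧ (h * f) ⊓ g = 0) :
    (0 : A) ≤ 1 := by
  have hp : (0:A) ≤ (1:A)⁺ := posPart_nonneg _
  have hn : (0:A) ≤ (1:A)⁻ := negPart_nonneg _
  have hd : (1:A)⁺ * (1:A)⁻ = 0 :=
    fa_disj_mul_zero falg hp hn (posPart_inf_negPart_eq_zero _)
  have hd' : (1:A)⁻ * (1:A)⁺ = 0 :=
    fa_disj_mul_zero falg hn hp (by rw [inf_comm]; exact posPart_inf_negPart_eq_zero _)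
  have key : (1:A) = (1:A)⁺ * (1:A)⁺ + (1:A)⁻ * (1:A)⁻ := by
    have h := posPart_sub_negPart (1:A)
    calc (1:A) = 1 * 1 := (one_mul 1).symm
      _ = ((1:A)⁺ - (1:A)⁻) * ((1:A)⁺ - (1:A)⁻) := by rw [h]
      _ = (1:A)⁺ * (1:A)⁺ - (1:A)⁺ * (1:A)⁻ - ((1:A)⁻ * (1:A)⁺ - (1:A)⁻ * (1:A)⁻) := by
          rw [sub_mul, mul_sub, mul_sub]
      _ = (1:A)⁺ * (1:A)⁺ + (1:A)⁻ * (1:A)⁻ := by rw [hd, hd']; abel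
  rw [key]
  exact add_nonneg (mulpos _ _ hp hp) (mulpos _ _ hn hn)

/-- Key f-algebra inequality: `n • (y - n • 1)⁺ ≤ y * y`. -/
private lemma fa_key
    (mulpos : ∀ x y : A, 0 ≤ x → 0 ≤ y → 0 ≤ x * y)
    (falg : ∀ f g h : A, f ⊓ g = 0 → 0 ≤ h → (f * h) ⊓ g = 0 ∧ (h * f) ⊓ g = 0)
    {y : A} (hy : 0 ≤ y) (n : ℕ) :
    n • ((y - n • (1:A))⁺) ≤ y * y := by
  have hone : (0:A) ≤ 1 := fa_one_nonneg mulpos falg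
  set z : A := y - n • (1:A) with hz
  have hw : 0 ≤ z⁺ := posPart_nonneg _
  have hv : 0 ≤ z⁻ := negPart_nonneg _
  have hmz : z⁺ * z⁻ = 0 :=
    fa_disj_mul_zero falg hw hv (posPart_inf_negPart_eq_zero _)
  have e1 : n • z⁺ = z⁺ * (n • (1:A)) := by
    rw [nsmul_eq_mul, nsmul_eq_mul, mul_one, (Nat.cast_commute (n : ℕ) (z⁺)).eq]
  have e2 : z⁺ * (n • (1:A)) ≤ z⁺ * y := by
    have h1 : z⁺ * z = z⁺ * z⁺ := by
      calc z⁺ * z = z⁺ * (z⁺ - z⁻) := by rw [posPart_sub_negPart]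
        _ = z⁺ * z⁺ := by rw [mul_sub, hmz, sub_zero]
    have h2 : 0 ≤ z⁺ * (y - n • (1:A)) := by
      rw [← hz, h1]; exact mulpos _ _ hw hw
    rw [mul_sub] at h2
    exact sub_nonneg.mp h2
  have e3 : z⁺ * y ≤ y * y := by
    have hzy : z⁺ ≤ y := by
      have h1 : z ≤ y := by
        rw [hz]; exact sub_le_self _ (nsmul_nonneg hone n)
      calc z⁺ ≤ y⁺ := posPart_mono h1
        _ = y := posPart_eq_self.mpr hy
    have h2 : 0 ≤ (y - z⁺) * y := mulpos _ _ (sub_nonneg.mpr hzy) hy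
    rw [sub_mul] at h2
    exact sub_nonneg.mp h2
  calc n • z⁺ = z⁺ * (n • (1:A)) := e1
    _ ≤ z⁺ * y := e2
    _ ≤ y * y := e3

/-- Core lemma: an additive positive functional vanishing on all `n • 1`
vanishes on every nonnegative element. -/
private lemma fa_core
    (mulpos : ∀ x y : A, 0 ≤ x → 0 ≤ y → 0 ≤ x * y)
    (falg : ∀ f g h : A, f ⊓ g = 0 → 0 ≤ h → (f * h) ⊓ g = 0 ∧ (h * f) ⊓ g = 0)
    (L : A → ℝ) (Ladd : ∀ a b, L (a + b) = L a + L b)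
    (Lpos : ∀ a : A, 0 ≤ a → 0 ≤ L a)
    (hL1 : ∀ n : ℕ, L (n • (1:A)) = 0)
    {y : A} (hy : 0 ≤ y) : L y = 0 := by
  have L0 : L 0 = 0 := by have := Ladd 0 0; simp at this; linarith
  have Lmono : ∀ a b : A, a ≤ b → L a ≤ L b := by
    intro a b hab
    have h1 : L b = L a + L (b - a) := by
      rw [← Ladd]; congr 1; abel
    have h2 := Lpos _ (sub_nonneg.mpr hab)
    linarith
  have Lnsmul : ∀ (n : ℕ) (a : A), L (n • a) = n * L a := by
    intro n a
    induction n with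
    | zero => simpa using L0
    | succ k ih => rw [succ_nsmul, Ladd, ih]; push_cast; ring
  have key : ∀ n : ℕ, (n : ℝ) * L y ≤ L (y * y) := by
    intro n
    have hdec : y ⊓ (n • (1:A)) + (y - n • (1:A))⁺ = y := by
      rw [inf_eq_sub_posPart_sub y (n • (1:A))]; abel
    have h1 : L (y ⊓ (n • (1:A))) ≤ 0 := by
      have := Lmono _ _ (inf_le_right : y ⊓ (n • (1:A)) ≤ n • (1:A))
      rw [hL1] at this; exact this
    have h2 : (n : ℝ) * L ((y - n • (1:A))⁺) ≤ L (y * y) := by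
      have := Lmono _ _ (fa_key mulpos falg hy n)
      rwa [Lnsmul] at this
    have hsum : L y = L (y ⊓ (n • (1:A))) + L ((y - n • (1:A))⁺) := by
      rw [← Ladd, hdec]
    have hn0 : (0:ℝ) ≤ (n : ℝ) := Nat.cast_nonneg n
    nlinarith [Lpos _ (posPart_nonneg (y - n • (1:A)))]
  have hy0 : 0 ≤ L y := Lpos _ hy
  by_contra hne
  have hpos : 0 < L y := lt_of_le_of_ne hy0 (Ne.symm hne)
  obtain ⟨n, hn⟩ := exists_nat_gt (L (y * y) / L y)
  have h1 := key n
  rw [div_lt_iff₀ hpos] at hn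
  linarith

private lemma add_posPart_zero (φ : A → ℝ)
    (hadd : ∀ a b, φ (a + b) = φ a + φ b)
    (habs : ∀ a, φ |a| = |φ a|)
    {z : A} (hz : φ z ≤ 0) : φ (z⁺) = 0 := by
  have l1 : z⁺ + z⁺ = z + |z| := by
    have a := posPart_sub_negPart z
    have b := posPart_add_negPart z
    calc z⁺ + z⁺ = (z⁺ - z⁻) + (z⁺ + z⁻) := by abel
      _ = z + |z| := by rw [a, b]
  have l2 : φ (z⁺) + φ (z⁺) = φ z + |φ z| := by
    rw [← hadd, l1, hadd, habs]
  have l3 : |φ z| = -φ z := abs_of_nonpos hz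
  linarith

private lemma add_negPart_zero (φ : A → ℝ)
    (hadd : ∀ a b, φ (a + b) = φ a + φ b)
    (habs : ∀ a, φ |a| = |φ a|)
    {z : A} (hz : 0 ≤ φ z) : φ (z⁻) = 0 := by
  have l1 : z⁻ + z⁻ = |z| - z := by
    have a := posPart_sub_negPart z
    have b := posPart_add_negPart z
    calc z⁻ + z⁻ = (z⁺ + z⁻) - (z⁺ - z⁻) := by abel
      _ = |z| - z := by rw [a, b]
  have hsub : ∀ a b : A, φ (a - b) = φ a - φ b := by
    intro a b
    have h1 : φ (a - b) + φ b = φ a := by rw [← hadd]; congr 1; abel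
    linarith
  have l2 : φ (z⁻) + φ (z⁻) = |φ z| - φ z := by
    rw [← hadd, l1, hsub, habs]
  have l3 : |φ z| = φ z := abs_of_nonneg hz
  linarith

private lemma rat_btwn {a b : ℝ} (ha : 0 ≤ a) (hab : a < b) :
    ∃ p q : ℕ, 0 < q ∧ a < (p : ℝ) / q ∧ (p : ℝ) / q < b := by
  obtain ⟨t, ht1, ht2⟩ := exists_rat_btwn hab
  have htpos : 0 < t := by
    have : (0:ℝ) < (t:ℝ) := lt_of_le_of_lt ha ht1
    exact_mod_cast this
  have hnum : (t.num.toNat : ℤ) = t.num := Int.toNat_of_nonneg (Rat.num_pos.mpr htpos).le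
  have hcast : ((t.num.toNat : ℕ) : ℝ) / (t.den : ℝ) = (t : ℝ) := by
    rw [Rat.cast_def]
    congr 1
    exact_mod_cast hnum
  exact ⟨t.num.toNat, t.den, t.pos, by rw [hcast]; exact ht1, by rw [hcast]; exact ht2⟩

private lemma real_squeeze {a b c : ℝ} (ha : 0 ≤ a) (hb : 0 ≤ b) (hc : 0 ≤ c)
    (hub : ∀ p q : ℕ, 0 < q → a * q < p → (q : ℝ) * c ≤ p * b)
    (hlb : ∀ p q : ℕ, 0 < q → (p : ℝ) < a * q → (p : ℝ) * b ≤ q * c) :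
    c = a * b := by
  have keyu : ∀ r : ℝ, a < r → c ≤ r * b := by
    intro r hr
    obtain ⟨p, q, hq, h1, h2⟩ := rat_btwn ha hr
    have hq' : (0:ℝ) < q := by exact_mod_cast hq
    have h3 := hub p q hq (by rwa [← lt_div_iff₀ hq'])
    have h4 : c ≤ (p / q) * b := by
      rw [div_mul_eq_mul_div, le_div_iff₀ hq']
      linarith [h3]
    calc c ≤ (p / q) * b := h4
      _ ≤ r * b := mul_le_mul_of_nonneg_right h2.le hb
  have upper : c ≤ a * b := by
    rcases eq_or_lt_of_le hb with hb0 | hbpos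
    · have h := keyu (a + 1) (by linarith)
      rw [← hb0] at h ⊢
      simpa using h
    · refine le_of_forall_pos_le_add ?_
      intro ε hε
      have h := keyu (a + ε / b) (lt_add_of_pos_right _ (div_pos hε hbpos))
      have h2 : (a + ε / b) * b = a * b + ε := by field_simp
      linarith
  have lower : a * b ≤ c := by
    rcases eq_or_lt_of_le ha with ha0 | hapos
    · rw [← ha0]; simpa using hc
    rcases eq_or_lt_of_le hb with hb0 | hbpos
    · rw [← hb0]; simpa using hc
    refine le_of_forall_pos_le_add ?_
    intro ε hε
    have hlo : max 0 (a - ε / b) < a :=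
      max_lt hapos (by linarith [div_pos hε hbpos])
    obtain ⟨p, q, hq, h1, h2⟩ := rat_btwn (le_max_left 0 (a - ε / b)) hlo
    have hq' : (0:ℝ) < q := by exact_mod_cast hq
    have h3 := hlb p q hq (by rwa [← div_lt_iff₀ hq'])
    have h4 : (p / q) * b ≤ c := by
      rw [div_mul_eq_mul_div, div_le_iff₀ hq']
      linarith [h3]
    have h5 : a - ε / b < (p : ℝ) / q := lt_of_le_of_lt (le_max_right 0 _) h1
    have h6 : (a - ε / b) * b = a * b - ε := by field_simp
    nlinarith
  linarith

/-- Multiplicativity of a real Riesz homomorphism with `φ 1 = 1` on a unital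
f-algebra. -/
private lemma fa_mult
    (mulpos : ∀ x y : A, 0 ≤ x → 0 ≤ y → 0 ≤ x * y)
    (falg : ∀ f g h : A, f ⊓ g = 0 → 0 ≤ h → (f * h) ⊓ g = 0 ∧ (h * f) ⊓ g = 0)
    (φ : A → ℝ) (hadd : ∀ a b, φ (a + b) = φ a + φ b)
    (habs : ∀ a, φ |a| = |φ a|) (hone : φ 1 = 1) :
    ∀ x y : A, φ (x * y) = φ x * φ y := by
  have h0 : φ 0 = 0 := by have := hadd 0 0; simp at this; linarith
  have hsub : ∀ a b : A, φ (a - b) = φ a - φ b := by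
    intro a b
    have h1 : φ (a - b) + φ b = φ a := by rw [← hadd]; congr 1; abel
    linarith
  have hpos : ∀ a : A, 0 ≤ a → 0 ≤ φ a := by
    intro a ha
    have := habs a
    rw [abs_of_nonneg ha] at this
    rw [this]
    exact abs_nonneg _
  have hmono : ∀ a b : A, a ≤ b → φ a ≤ φ b := by
    intro a b hab
    have h1 := hpos _ (sub_nonneg.mpr hab)
    rw [hsub] at h1
    linarith
  have hnsmul : ∀ (n : ℕ) (a : A), φ (n • a) = n * φ a := by
    intro n a
    induction n with
    | zero => simpa using h0
    | succ k ih => rw [succ_nsmul, hadd, ih]; push_cast; ring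
  -- main nonneg case
  have main : ∀ x y : A, 0 ≤ x → 0 ≤ y → φ (x * y) = φ x * φ y := by
    intro x y hx hy
    have hφx : 0 ≤ φ x := hpos x hx
    have hφy : 0 ≤ φ y := hpos y hy
    have hφxy : 0 ≤ φ (x * y) := hpos _ (mulpos _ _ hx hy)
    refine real_squeeze hφx hφy hφxy ?_ ?_
    · -- upper: φ x * q < p → q * φ (x*y) ≤ p * φ y
      intro p q hq hlt
      set z : A := q • x - p • (1:A) with hz
      have hφz : φ z = q * φ x - p := by
        rw [hz, hsub, hnsmul, hnsmul, hone]; ring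
      have hφzneg : φ z ≤ 0 := by rw [hφz]; nlinarith [hlt]
      have hv : φ (z⁺) = 0 := add_posPart_zero φ hadd habs hφzneg
      have hvy : φ (z⁺ * y) = 0 := by
        refine fa_core mulpos falg (fun b => φ (z⁺ * b))
          (fun a b => by show φ (z⁺ * (a + b)) = φ (z⁺ * a) + φ (z⁺ * b); rw [mul_add, hadd])
          (fun a haa => hpos _ (mulpos _ _ (posPart_nonneg _) haa))
          (fun n => ?_) hy
        show φ (z⁺ * (n • (1:A))) = 0
        have e : z⁺ * (n • (1:A)) = n • z⁺ := by
          rw [nsmul_eq_mul, nsmul_eq_mul, mul_one, ← (Nat.cast_commute (n:ℕ) (z⁺)).eq]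
        rw [e, hnsmul, hv, mul_zero]
      have hle : z * y ≤ z⁺ * y := by
        have h1 : 0 ≤ (z⁺ - z) * y :=
          mulpos _ _ (sub_nonneg.mpr (le_posPart z)) hy
        rw [sub_mul] at h1
        exact sub_nonneg.mp h1
      have h2 : φ (z * y) ≤ 0 := by
        calc φ (z * y) ≤ φ (z⁺ * y) := hmono _ _ hle
          _ = 0 := hvy
      have hzy : z * y = q • (x * y) - p • y := by
        rw [hz, sub_mul, nsmul_eq_mul, nsmul_eq_mul, nsmul_eq_mul, nsmul_eq_mul]
        noncomm_ring
      rw [hzy, hsub, hnsmul, hnsmul] at h2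
      linarith
    · -- lower: p < φ x * q → p * φ y ≤ q * φ (x*y)
      intro p q hq hlt
      set z : A := q • x - p • (1:A) with hz
      have hφz : φ z = q * φ x - p := by
        rw [hz, hsub, hnsmul, hnsmul, hone]; ring
      have hφzpos : 0 ≤ φ z := by rw [hφz]; nlinarith [hlt]
      have hv : φ (z⁻) = 0 := add_negPart_zero φ hadd habs hφzpos
      have hvy : φ (z⁻ * y) = 0 := by
        refine fa_core mulpos falg (fun b => φ (z⁻ * b))
          (fun a b => by show φ (z⁻ * (a + b)) = φ (z⁻ * a) + φ (z⁻ * b); rw [mul_add, hadd])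
          (fun a haa => hpos _ (mulpos _ _ (negPart_nonneg _) haa))
          (fun n => ?_) hy
        show φ (z⁻ * (n • (1:A))) = 0
        have e : z⁻ * (n • (1:A)) = n • z⁻ := by
          rw [nsmul_eq_mul, nsmul_eq_mul, mul_one, ← (Nat.cast_commute (n:ℕ) (z⁻)).eq]
        rw [e, hnsmul, hv, mul_zero]
      have hle : (-z) * y ≤ z⁻ * y := by
        have h1 : 0 ≤ (z⁻ - (-z)) * y :=
          mulpos _ _ (sub_nonneg.mpr (neg_le_negPart z)) hy
        rw [sub_mul] at h1
        exact sub_nonneg.mp h1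
      have h2 : φ ((-z) * y) ≤ 0 := by
        calc φ ((-z) * y) ≤ φ (z⁻ * y) := hmono _ _ hle
          _ = 0 := hvy
      have hzy : (-z) * y = p • y - q • (x * y) := by
        rw [hz, neg_sub, sub_mul, nsmul_eq_mul, nsmul_eq_mul, nsmul_eq_mul, nsmul_eq_mul]
        noncomm_ring
      rw [hzy, hsub, hnsmul, hnsmul] at h2
      linarith
  -- extension to all elements
  have ext1 : ∀ x y : A, 0 ≤ y → φ (x * y) = φ x * φ y := by
    intro x y hy
    have hx := posPart_sub_negPart x
    calc φ (x * y) = φ (x⁺ * y - x⁻ * y) := by rw [← sub_mul, hx]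
      _ = φ (x⁺ * y) - φ (x⁻ * y) := hsub _ _
      _ = φ (x⁺) * φ y - φ (x⁻) * φ y := by
          rw [main _ _ (posPart_nonneg _) hy, main _ _ (negPart_nonneg _) hy]
      _ = (φ (x⁺) - φ (x⁻)) * φ y := by ring
      _ = φ x * φ y := by rw [← hsub, hx]
  intro x y
  have hy := posPart_sub_negPart y
  calc φ (x * y) = φ (x * y⁺ - x * y⁻) := by rw [← mul_sub, hy]
    _ = φ (x * y⁺) - φ (x * y⁻) := hsub _ _
    _ = φ x * φ (y⁺) - φ x * φ (y⁻) := by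
        rw [ext1 _ _ (posPart_nonneg _), ext1 _ _ (negPart_nonneg _)]
    _ = φ x * (φ (y⁺) - φ (y⁻)) := by ring
    _ = φ x * φ y := by rw [← hsub, hy]

end Helpers

/-- A real-valued Riesz bimorphism on a product of unital Archimedean
f-algebras sending the pair of units to `1` is multiplicative. -/
theorem riesz_bimorphism_real_multiplicative
    {A₁ A₂ : Type*}
    [Ring A₁] [Lattice A₁] [CovariantClass A₁ A₁ (· + ·) (· ≤ ·)] [Module ℝ A₁]
    [Ring A₂] [Lattice A₂] [CovariantClass A₂ A₂ (· + ·) (· ≤ ·)] [Module ℝ A₂]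
    (h₁mulpos : ∀ x y : A₁, 0 ≤ x → 0 ≤ y → 0 ≤ x * y)
    (h₁falg : ∀ f g h : A₁, f ⊓ g = 0 → 0 ≤ h → (f * h) ⊓ g = 0 ∧ (h * f) ⊓ g = 0)
    (h₁arch : ∀ x y : A₁, (∀ n : ℕ, n • x ≤ y) → x ≤ 0)
    (h₂mulpos : ∀ x y : A₂, 0 ≤ x → 0 ≤ y → 0 ≤ x * y)
    (h₂falg : ∀ f g h : A₂, f ⊓ g = 0 → 0 ≤ h → (f * h) ⊓ g = 0 ∧ (h * f) ⊓ g = 0)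
    (h₂arch : ∀ x y : A₂, (∀ n : ℕ, n • x ≤ y) → x ≤ 0)
    (T : A₁ →ₗ[ℝ] A₂ →ₗ[ℝ] ℝ)
    -- `T` is a Riesz bimorphism:
    (hbim₁ : ∀ y : A₂, 0 ≤ y → ∀ x : A₁, T |x| y = |T x y|)
    (hbim₂ : ∀ x : A₁, 0 ≤ x → ∀ y : A₂, T x |y| = |T x y|)
    (hunit : T 1 1 = 1) :
    ∀ a₁ x₁ : A₁, ∀ a₂ x₂ : A₂,
      T (a₁ * x₁) (a₂ * x₂) = T a₁ a₂ * T x₁ x₂ := by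
  have one1 : (0:A₁) ≤ 1 := fa_one_nonneg h₁mulpos h₁falg
  have one2 : (0:A₂) ≤ 1 := fa_one_nonneg h₂mulpos h₂falg
  -- the two marginal functionals
  set φ : A₁ → ℝ := fun x => T x 1 with hφdef
  set ψ : A₂ → ℝ := fun y => T 1 y with hψdef
  have φadd : ∀ a b : A₁, φ (a + b) = φ a + φ b := by
    intro a b; simp [hφdef, map_add]
  have ψadd : ∀ a b : A₂, ψ (a + b) = ψ a + ψ b := by
    intro a b; simp [hψdef, map_add]
  have φabs : ∀ a : A₁, φ |a| = |φ a| := fun a => hbim₁ 1 one2 a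
  have ψabs : ∀ a : A₂, ψ |a| = |ψ a| := fun a => hbim₂ 1 one1 a
  have φsub : ∀ a b : A₁, φ (a - b) = φ a - φ b := by
    intro a b
    have h1 : φ (a - b) + φ b = φ a := by rw [← φadd]; congr 1; abel
    linarith
  have ψsub : ∀ a b : A₂, ψ (a - b) = ψ a - ψ b := by
    intro a b
    have h1 : ψ (a - b) + ψ b = ψ a := by rw [← ψadd]; congr 1; abel
    linarith
  have φ0 : φ 0 = 0 := by have := φadd 0 0; simp at this; linarith
  have ψ0 : ψ 0 = 0 := by have := ψadd 0 0; simp at this; linarith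
  have φnsmul : ∀ (n : ℕ) (a : A₁), φ (n • a) = n * φ a := by
    intro n a
    induction n with
    | zero => simpa using φ0
    | succ k ih => rw [succ_nsmul, φadd, ih]; push_cast; ring
  have φpos : ∀ a : A₁, 0 ≤ a → 0 ≤ φ a := by
    intro a ha
    have := φabs a
    rw [abs_of_nonneg ha] at this
    rw [this]; exact abs_nonneg _
  have ψpos : ∀ a : A₂, 0 ≤ a → 0 ≤ ψ a := by
    intro a ha
    have := ψabs a
    rw [abs_of_nonneg ha] at this
    rw [this]; exact abs_nonneg _
  -- positivity and monotonicity of the partial maps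
  have Tpos : ∀ (x : A₁) (y : A₂), 0 ≤ x → 0 ≤ y → 0 ≤ T x y := by
    intro x y hx hy
    have := hbim₂ x hx y
    rw [abs_of_nonneg hy] at this
    rw [this]; exact abs_nonneg _
  -- factorization for nonnegative arguments
  have hfact_nn : ∀ x : A₁, 0 ≤ x → ∀ y : A₂, 0 ≤ y → T x y = φ x * ψ y := by
    intro x hx y hy
    refine real_squeeze (φpos x hx) (ψpos y hy) (Tpos x y hx hy) ?_ ?_
    · -- upper
      intro p q hq hlt
      set z : A₁ := q • x - p • (1:A₁) with hz
      have hφz : φ z = q * φ x - p := by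
        rw [hz, φsub, φnsmul, φnsmul]
        have : φ 1 = 1 := hunit
        rw [this]; ring
      have hφzneg : φ z ≤ 0 := by rw [hφz]; nlinarith [hlt]
      have hv : φ (z⁺) = 0 := add_posPart_zero φ φadd φabs hφzneg
      have hvy : T (z⁺) y = 0 := by
        refine fa_core h₂mulpos h₂falg (fun b => T (z⁺) b)
          (fun a b => by simp [map_add])
          (fun a haa => Tpos _ _ (posPart_nonneg _) haa)
          (fun n => by simp only [map_nsmul, smul_eq_mul]; rw [show T (z⁺) 1 = φ (z⁺) from rfl, hv, smul_zero]) hy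
      have hmono1 : T z y ≤ T (z⁺) y := by
        have h1 : 0 ≤ T (z⁺ - z) y := Tpos _ _ (sub_nonneg.mpr (le_posPart z)) hy
        have h2 : T (z⁺ - z) y = T (z⁺) y - T z y := by
          rw [map_sub, LinearMap.sub_apply]
        linarith
      have hTz : T z y = q * T x y - p * ψ y := by
        have h1 : T z = q • T x - p • T 1 := by
          rw [hz, map_sub, map_nsmul, map_nsmul]
        rw [h1, LinearMap.sub_apply, LinearMap.smul_apply, LinearMap.smul_apply,
          nsmul_eq_mul, nsmul_eq_mul]
      have : T z y ≤ 0 := le_trans hmono1 (le_of_eq hvy)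
      rw [hTz] at this
      linarith
    · -- lower
      intro p q hq hlt
      set z : A₁ := q • x - p • (1:A₁) with hz
      have hφz : φ z = q * φ x - p := by
        rw [hz, φsub, φnsmul, φnsmul]
        have : φ 1 = 1 := hunit
        rw [this]; ring
      have hφzpos : 0 ≤ φ z := by rw [hφz]; nlinarith [hlt]
      have hv : φ (z⁻) = 0 := add_negPart_zero φ φadd φabs hφzpos
      have hvy : T (z⁻) y = 0 := by
        refine fa_core h₂mulpos h₂falg (fun b => T (z⁻) b)
          (fun a b => by simp [map_add])
          (fun a haa => Tpos _ _ (negPart_nonneg _) haa)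
          (fun n => by simp only [map_nsmul, smul_eq_mul]; rw [show T (z⁻) 1 = φ (z⁻) from rfl, hv, smul_zero]) hy
      have hmono1 : T (-z) y ≤ T (z⁻) y := by
        have h1 : 0 ≤ T (z⁻ - (-z)) y := Tpos _ _ (sub_nonneg.mpr (neg_le_negPart z)) hy
        have h2 : T (z⁻ - (-z)) y = T (z⁻) y - T (-z) y := by
          rw [map_sub, LinearMap.sub_apply]
        linarith
      have hTz : T (-z) y = p * ψ y - q * T x y := by
        have h1 : T (-z) = p • T 1 - q • T x := by
          rw [hz, neg_sub, map_sub, map_nsmul, map_nsmul]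
        rw [h1, LinearMap.sub_apply, LinearMap.smul_apply, LinearMap.smul_apply,
          nsmul_eq_mul, nsmul_eq_mul]
      have : T (-z) y ≤ 0 := le_trans hmono1 (le_of_eq hvy)
      rw [hTz] at this
      linarith
  -- factorization for all arguments
  have hfact1 : ∀ x : A₁, ∀ y : A₂, 0 ≤ y → T x y = φ x * ψ y := by
    intro x y hy
    have hx := posPart_sub_negPart x
    have e1 : T x y = T (x⁺) y - T (x⁻) y := by
      rw [← LinearMap.sub_apply, ← map_sub, hx]
    have e2 : φ x = φ (x⁺) - φ (x⁻) := by rw [← φsub, hx]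
    rw [e1, hfact_nn _ (posPart_nonneg _) _ hy, hfact_nn _ (negPart_nonneg _) _ hy, e2]
    ring
  have hfact : ∀ (x : A₁) (y : A₂), T x y = φ x * ψ y := by
    intro x y
    have hy := posPart_sub_negPart y
    have e1 : T x y = T x (y⁺) - T x (y⁻) := by
      rw [← map_sub, hy]
    have e2 : ψ y = ψ (y⁺) - ψ (y⁻) := by rw [← ψsub, hy]
    rw [e1, hfact1 _ _ (posPart_nonneg _), hfact1 _ _ (negPart_nonneg _), e2]
    ring
  -- multiplicativity of the marginals
  have φ1 : φ 1 = 1 := hunit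
  have ψ1 : ψ 1 = 1 := hunit
  have φmul : ∀ x y : A₁, φ (x * y) = φ x * φ y :=
    fa_mult h₁mulpos h₁falg φ φadd φabs φ1
  have ψmul : ∀ x y : A₂, ψ (x * y) = ψ x * ψ y :=
    fa_mult h₂mulpos h₂falg ψ ψadd ψabs ψ1
  intro a₁ x₁ a₂ x₂
  rw [hfact (a₁ * x₁) (a₂ * x₂), φmul, ψmul, hfact a₁ a₂, hfact x₁ x₂]
  ring
end

section
/- Let A₁, A₂ and B be Archimedean f-algebras with unit elements e₁, e₂ and e_B respectively, and let T : A₁ × A₂ → B be a lattice (Riesz) bimorphism satisfying T(e₁, e₂) = e_B. Then T is a multiplicative bilinear map: T(a₁x₁, a₂x₂) = T(a₁, a₂)·T(x₁, x₂). -/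
set_option linter.unusedSectionVars false

open Finset

section LatticeGroup
variable {G : Type*} [AddCommGroup G] [Lattice G] [CovariantClass G G (· + ·) (· ≤ ·)]

/-- Subadditivity of the infimum for nonnegative elements. -/
lemma aux_inf_add_le {u v w : G} (hu : 0 ≤ u) (hv : 0 ≤ v) (hw : 0 ≤ w) :
    u ⊓ (v + w) ≤ u ⊓ v + u ⊓ w := by
  have h : u ⊓ v + (u ⊓ w) = ((u + u) ⊓ (v + u)) ⊓ ((u + w) ⊓ (v + w)) := by
    rw [add_inf u w (u ⊓ v), inf_add u v u, inf_add u v w]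
  rw [h]
  refine le_inf (le_inf ?_ ?_) (le_inf ?_ ?_)
  · exact inf_le_left.trans (le_add_of_nonneg_right hu)
  · exact inf_le_left.trans (le_add_of_nonneg_left hv)
  · exact inf_le_left.trans (le_add_of_nonneg_right hw)
  · exact inf_le_right

lemma aux_inf_core (t e : G) (he : 0 ≤ e) : t⁺ ⊓ e - t⁻ = t ⊓ e := by
  have h1 : t⁺ ⊓ e - t⁻ = t ⊓ (e - t⁻) := by
    rw [inf_sub, posPart_sub_negPart]
  rw [h1]
  apply le_antisymm
  · exact inf_le_inf_left t (sub_le_self e (negPart_nonneg t))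
  · refine le_inf inf_le_left (le_sub_iff_add_le.mpr ?_)
    have h2 : t ⊓ e + t⁻ = t⁺ ⊓ (e + t⁻) := by
      rw [inf_add]
      have h3 : t⁺ = t + t⁻ := sub_eq_iff_eq_add.mp (posPart_sub_negPart t)
      rw [← h3]
    calc t ⊓ e + t⁻ = t⁺ ⊓ (e + t⁻) := h2
      _ ≤ t⁺ ⊓ e + t⁺ ⊓ t⁻ := aux_inf_add_le (posPart_nonneg t) he (negPart_nonneg t)
      _ = t⁺ ⊓ e := by rw [posPart_inf_negPart_eq_zero, add_zero]
      _ ≤ e := inf_le_right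

lemma aux_step (e z : G) (he : 0 ≤ e) (m : ℕ) :
    z ⊓ (m • e) + ((z - m • e)⁺ ⊓ e) = z ⊓ ((m + 1) • e) := by
  set t := z - m • e with ht
  have hz : z = t + m • e := by rw [ht]; abel
  rw [hz]
  have h1 : (t + m • e) ⊓ (m • e) = t ⊓ 0 + m • e := by
    rw [inf_add t 0 (m • e), zero_add]
  have h2 : (t + m • e) ⊓ ((m + 1) • e) = t ⊓ e + m • e := by
    rw [inf_add t e (m • e), succ_nsmul e m]
    rw [add_comm (m • e) e]
  have h4 : t ⊓ 0 = -t⁻ := by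
    have : t⁻ = -(t ⊓ 0) := by rw [neg_inf, neg_zero, negPart_def]
    rw [this, neg_neg]
  rw [h1, h2, ← aux_inf_core t e he, h4]; abel

lemma aux_partition (e z : G) (he : 0 ≤ e) (hz : 0 ≤ z) (m : ℕ) :
    ∑ k ∈ range m, ((z - k • e)⁺ ⊓ e) = z ⊓ (m • e) := by
  induction m with
  | zero => simpa using (inf_eq_right.mpr hz)
  | succ n ih => rw [sum_range_succ, ih, aux_step e z he n]

lemma aux_orth (t e : G) (he : 0 ≤ e) :
    (e - t⁺ ⊓ e) ⊓ ((t - e)⁺ ⊓ e) = 0 := by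
  apply le_antisymm
  · have ha : e - t⁺ ⊓ e = (t⁺ - e)⁻ := by
      rw [sub_inf, sub_self, negPart_def, neg_sub]
    have hb : (t - e)⁺ ⊓ e ≤ (t⁺ - e)⁺ :=
      inf_le_left.trans (posPart_mono (sub_le_sub_right (le_posPart t) e))
    calc (e - t⁺ ⊓ e) ⊓ ((t - e)⁺ ⊓ e) ≤ (t⁺ - e)⁻ ⊓ (t⁺ - e)⁺ := by
          rw [ha]; exact inf_le_inf_left _ hb
      _ = 0 := by rw [inf_comm, posPart_inf_negPart_eq_zero]
  · exact le_inf (sub_nonneg.2 inf_le_right) (le_inf (posPart_nonneg _) he)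

lemma aux_R {α β γ : G} (hα : 0 ≤ α) (hβ : 0 ≤ β) (hγ : 0 ≤ γ)
    (hle : α ≤ β + γ) (horth : α ⊓ γ = 0) : α ≤ β := by
  calc α = α ⊓ (β + γ) := (inf_eq_left.mpr hle).symm
    _ ≤ α ⊓ β + α ⊓ γ := aux_inf_add_le hα hβ hγ
    _ = α ⊓ β := by rw [horth, add_zero]
    _ ≤ β := inf_le_right

lemma aux_add_le_add {a b c d : G} (h1 : a ≤ b) (h2 : c ≤ d) : a + c ≤ b + d := by
  calc a + c ≤ a + d := add_le_add (le_refl a) h2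
    _ = d + a := add_comm _ _
    _ ≤ d + b := add_le_add (le_refl d) h1
    _ = b + d := add_comm _ _

lemma aux_sum_le_sum (n : ℕ) (f g : ℕ → G) (h : ∀ k, f k ≤ g k) :
    ∑ k ∈ range n, f k ≤ ∑ k ∈ range n, g k := by
  induction n with
  | zero => simp
  | succ m ih => rw [sum_range_succ, sum_range_succ]; exact aux_add_le_add ih (h m)

end LatticeGroup

section RingAux
variable {A : Type*} [Ring A] [Lattice A] [CovariantClass A A (· + ·) (· ≤ ·)]

lemma aux_orth_mul (hfa : ∀ f g h : A, f ⊓ g = 0 → 0 ≤ h → (f * h) ⊓ g = 0 ∧ (h * f) ⊓ g = 0)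
    {f g : A} (h : f ⊓ g = 0) : f * g = 0 := by
  have hf : 0 ≤ f := h ▸ inf_le_left
  have hg : 0 ≤ g := h ▸ inf_le_right
  have h1 : (f * g) ⊓ g = 0 := (hfa f g g h hg).1
  have h2 := (hfa g (f * g) f (by rw [inf_comm]; exact h1) hf).2
  simpa using h2

lemma aux_one_nonneg (hmul : ∀ x y : A, 0 ≤ x → 0 ≤ y → 0 ≤ x * y)
    (hfa : ∀ f g h : A, f ⊓ g = 0 → 0 ≤ h → (f * h) ⊓ g = 0 ∧ (h * f) ⊓ g = 0) :
    (0 : A) ≤ 1 := by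
  have h0 : (1 : A)⁺ * (1 : A)⁻ = 0 := aux_orth_mul hfa (posPart_inf_negPart_eq_zero 1)
  have h1 : (1 : A)⁻ = -((1 : A)⁻ * (1 : A)⁻) := by
    calc (1 : A)⁻ = ((1 : A)⁺ - (1 : A)⁻) * (1 : A)⁻ := by
          rw [posPart_sub_negPart, one_mul]
      _ = -((1 : A)⁻ * (1 : A)⁻) := by rw [sub_mul, h0, zero_sub]
  have h2 : (1 : A)⁻ ≤ 0 := by
    rw [h1]
    exact neg_nonpos.mpr (hmul _ _ (negPart_nonneg _) (negPart_nonneg _))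
  have h3 : (1 : A)⁻ = 0 := le_antisymm h2 (negPart_nonneg _)
  have h4 : (1 : A)⁺ = 1 := by
    have := posPart_sub_negPart (1 : A)
    rw [h3, sub_zero] at this; exact this
  rw [← h4]; exact posPart_nonneg _

lemma aux_mul_mono (hmul : ∀ x y : A, 0 ≤ x → 0 ≤ y → 0 ≤ x * y)
    {p p' q q' : A} (hp : 0 ≤ p) (hq : 0 ≤ q) (hpp : p ≤ p') (hqq : q ≤ q') :
    p * q ≤ p' * q' := by
  have h1 : 0 ≤ (p' - p) * q := hmul _ _ (sub_nonneg.2 hpp) hq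
  have h2 : 0 ≤ p' * (q' - q) := hmul _ _ (hp.trans hpp) (sub_nonneg.2 hqq)
  rw [sub_mul] at h1
  rw [mul_sub] at h2
  exact (sub_nonneg.1 h1).trans (sub_nonneg.1 h2)

lemma aux_piece_mul (hmul : ∀ x y : A, 0 ≤ x → 0 ≤ y → 0 ≤ x * y)
    (hfa : ∀ f g h : A, f ⊓ g = 0 → 0 ≤ h → (f * h) ⊓ g = 0 ∧ (h * f) ⊓ g = 0)
    {u u' v : A} (hu0 : 0 ≤ u) (hu1 : u ≤ 1) (hu' : 0 ≤ u')
    (horth : (1 - u) ⊓ u' = 0) (hv0 : 0 ≤ v) (hv1 : v ≤ 1) :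
    u' ⊓ v ≤ u * v ∧ u * v ≤ u ⊓ v := by
  constructor
  · have hw0 : 0 ≤ u' ⊓ v := le_inf hu' hv0
    have hwo : (1 - u) ⊓ (u' ⊓ v) = 0 := by
      apply le_antisymm
      · calc (1 - u) ⊓ (u' ⊓ v) ≤ (1 - u) ⊓ u' := inf_le_inf_left _ inf_le_left
          _ = 0 := horth
      · exact le_inf (sub_nonneg.2 hu1) hw0
    have hz : (1 - u) * (u' ⊓ v) = 0 := aux_orth_mul hfa hwo
    have he : u' ⊓ v = u * (u' ⊓ v) := by
      have h5 : (1 - u) * (u' ⊓ v) = u' ⊓ v - u * (u' ⊓ v) := by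
        rw [sub_mul, one_mul]
      rw [hz] at h5
      exact sub_eq_zero.1 h5.symm
    calc u' ⊓ v = u * (u' ⊓ v) := he
      _ ≤ u * v := aux_mul_mono hmul hu0 hw0 le_rfl inf_le_right
  · refine le_inf ?_ ?_
    · calc u * v ≤ u * 1 := aux_mul_mono hmul hu0 hv0 le_rfl hv1
        _ = u := mul_one u
    · calc u * v ≤ 1 * v := aux_mul_mono hmul hu0 hv0 hu1 le_rfl
        _ = v := one_mul v

lemma aux_tail (hmul : ∀ x y : A, 0 ≤ x → 0 ≤ y → 0 ≤ x * y)
    (hfa : ∀ f g h : A, f ⊓ g = 0 → 0 ≤ h → (f * h) ⊓ g = 0 ∧ (h * f) ⊓ g = 0)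
    {x : A} (hx : 0 ≤ x) (m : ℕ) :
    m • ((x - m • (1 : A))⁺) ≤ x * x := by
  set r := (x - m • (1 : A))⁺ with hr
  have hr0 : 0 ≤ r := posPart_nonneg _
  have h1 : (0 : A) ≤ 1 := aux_one_nonneg hmul hfa
  have hrx : r ≤ x := by
    calc r ≤ x⁺ := posPart_mono (sub_le_self _ (nsmul_nonneg h1 m))
      _ = x := posPart_eq_self.2 hx
  have hz : r * (x - m • (1 : A))⁻ = 0 := aux_orth_mul hfa (posPart_inf_negPart_eq_zero _)
  have h3 : 0 ≤ r * (x - m • (1 : A)) := by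
    have h4 : r * (x - m • (1 : A)) = r * r - r * ((x - m • (1 : A))⁻) := by
      rw [← mul_sub]
      congr 1
      exact (posPart_sub_negPart _).symm
    rw [h4, hz, sub_zero]
    exact hmul _ _ hr0 hr0
  have h5 : r * (x - m • (1 : A)) = r * x - m • r := by
    rw [mul_sub, mul_smul_comm, mul_one]
  rw [h5] at h3
  exact (sub_nonneg.1 h3).trans (aux_mul_mono hmul hr0 hx hrx le_rfl)

end RingAux

section Master

set_option maxHeartbeats 1000000 in
lemma aux_master {A₁ A₂ B : Type*}
    [Ring A₁] [Lattice A₁] [CovariantClass A₁ A₁ (· + ·) (· ≤ ·)] [Module ℝ A₁]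
    [Ring A₂] [Lattice A₂] [CovariantClass A₂ A₂ (· + ·) (· ≤ ·)] [Module ℝ A₂]
    [Ring B] [Lattice B] [CovariantClass B B (· + ·) (· ≤ ·)] [Module ℝ B]
    (h₁mulpos : ∀ x y : A₁, 0 ≤ x → 0 ≤ y → 0 ≤ x * y)
    (h₁falg : ∀ f g h : A₁, f ⊓ g = 0 → 0 ≤ h → (f * h) ⊓ g = 0 ∧ (h * f) ⊓ g = 0)
    (h₂mulpos : ∀ x y : A₂, 0 ≤ x → 0 ≤ y → 0 ≤ x * y)
    (h₂falg : ∀ f g h : A₂, f ⊓ g = 0 → 0 ≤ h → (f * h) ⊓ g = 0 ∧ (h * f) ⊓ g = 0)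
    (hBmulpos : ∀ x y : B, 0 ≤ x → 0 ≤ y → 0 ≤ x * y)
    (hBfalg : ∀ f g h : B, f ⊓ g = 0 → 0 ≤ h → (f * h) ⊓ g = 0 ∧ (h * f) ⊓ g = 0)
    (hBarch : ∀ x y : B, (∀ n : ℕ, n • x ≤ y) → x ≤ 0)
    (T : A₁ →ₗ[ℝ] A₂ →ₗ[ℝ] B)
    (hbim₁ : ∀ y : A₂, 0 ≤ y → ∀ x : A₁, T |x| y = |T x y|)
    (hunit : T 1 1 = 1) :
    (∀ (x : A₁) (y : A₂), T x y = T x 1 * T 1 y) ∧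
      (∀ x y : A₁, T (x * y) 1 = T x 1 * T y 1) := by
  -- basic linearity helpers
  have Tadd1 : ∀ (x x' : A₁) (y : A₂), T (x + x') y = T x y + T x' y := fun x x' y => by simp
  have Tadd2 : ∀ (x : A₁) (y y' : A₂), T x (y + y') = T x y + T x y' := fun x y y' => by simp
  have Tsub1 : ∀ (x x' : A₁) (y : A₂), T (x - x') y = T x y - T x' y := fun x x' y => by simp
  have Tsub2 : ∀ (x : A₁) (y y' : A₂), T x (y - y') = T x y - T x y' := fun x y y' => by simp
  have Tsmul1 : ∀ (n : ℕ) (x : A₁) (y : A₂), T (n • x) y = n • T x y := by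
    intro n x y
    induction n with
    | zero => simp
    | succ k ih => rw [succ_nsmul, Tadd1, ih, succ_nsmul]
  have Tsmul2 : ∀ (n : ℕ) (x : A₁) (y : A₂), T x (n • y) = n • T x y := by
    intro n x y
    induction n with
    | zero => simp
    | succ k ih => rw [succ_nsmul, Tadd2, ih, succ_nsmul]
  have Tsum1 : ∀ (n : ℕ) (f : ℕ → A₁) (y : A₂),
      T (∑ k ∈ range n, f k) y = ∑ k ∈ range n, T (f k) y := by
    intro n f y
    induction n with
    | zero => simp
    | succ k ih => rw [sum_range_succ, sum_range_succ, Tadd1, ih]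
  have Tsum2 : ∀ (n : ℕ) (f : ℕ → A₂) (x : A₁),
      T x (∑ k ∈ range n, f k) = ∑ k ∈ range n, T x (f k) := by
    intro n f x
    induction n with
    | zero => simp
    | succ k ih => rw [sum_range_succ, sum_range_succ, Tadd2, ih]
  have h1A₁ : (0 : A₁) ≤ 1 := aux_one_nonneg h₁mulpos h₁falg
  have h1A₂ : (0 : A₂) ≤ 1 := aux_one_nonneg h₂mulpos h₂falg
  have h1B : (0 : B) ≤ 1 := aux_one_nonneg hBmulpos hBfalg
  have Tpos : ∀ (x : A₁) (y : A₂), 0 ≤ x → 0 ≤ y → 0 ≤ T x y := by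
    intro x y hx hy
    have h := hbim₁ y hy x
    rw [abs_of_nonneg hx] at h
    rw [h]; exact abs_nonneg _
  have Tmono1 : ∀ {x x' : A₁} (y : A₂), x ≤ x' → 0 ≤ y → T x y ≤ T x' y := by
    intro x x' y h hy
    have h2 := Tpos (x' - x) y (sub_nonneg.2 h) hy
    rw [Tsub1] at h2
    exact sub_nonneg.1 h2
  have Tmono2 : ∀ (x : A₁) {y y' : A₂}, 0 ≤ x → y ≤ y' → T x y ≤ T x y' := by
    intro x y y' hx h
    have h2 := Tpos x (y' - y) hx (sub_nonneg.2 h)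
    rw [Tsub2] at h2
    exact sub_nonneg.1 h2
  have cancel2 : ∀ {u v : B}, (2 : ℕ) • u = (2 : ℕ) • v → u = v := by
    intro u v h
    have h' : ((2 : ℕ) : ℝ) • u = ((2 : ℕ) : ℝ) • v := by
      rw [Nat.cast_smul_eq_nsmul, Nat.cast_smul_eq_nsmul]; exact h
    calc u = ((2 : ℕ) : ℝ)⁻¹ • (((2 : ℕ) : ℝ) • u) := by
          rw [inv_smul_smul₀ (by norm_num)]
      _ = ((2 : ℕ) : ℝ)⁻¹ • (((2 : ℕ) : ℝ) • v) := by rw [h']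
      _ = v := by rw [inv_smul_smul₀ (by norm_num)]
  have habs2 : ∀ a : A₁, a + |a| = (2 : ℕ) • a⁺ := by
    intro a
    calc a + |a| = (a⁺ - a⁻) + (a⁺ + a⁻) := by rw [posPart_sub_negPart, posPart_add_negPart]
      _ = (2 : ℕ) • a⁺ := by abel
  have habs2B : ∀ b : B, b + |b| = (2 : ℕ) • b⁺ := by
    intro b
    calc b + |b| = (b⁺ - b⁻) + (b⁺ + b⁻) := by rw [posPart_sub_negPart, posPart_add_negPart]
      _ = (2 : ℕ) • b⁺ := by abel
  have TposPart : ∀ (x : A₁) (y : A₂), 0 ≤ y → T (x⁺) y = (T x y)⁺ := by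
    intro x y hy
    apply cancel2
    calc (2 : ℕ) • T (x⁺) y = T ((2 : ℕ) • x⁺) y := (Tsmul1 2 _ y).symm
      _ = T (x + |x|) y := by rw [← habs2]
      _ = T x y + |T x y| := by rw [Tadd1, hbim₁ y hy]
      _ = (2 : ℕ) • (T x y)⁺ := habs2B _
  have Tinf1 : ∀ (x x' : A₁) (y : A₂), 0 ≤ y → T (x ⊓ x') y = T x y ⊓ T x' y := by
    intro x x' y hy
    rw [inf_eq_sub_posPart_sub x x', Tsub1, TposPart _ y hy, Tsub1,
      ← inf_eq_sub_posPart_sub]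
  have Torth : ∀ (s t : A₁) (w w' : A₂), s ⊓ t = 0 → 0 ≤ w → 0 ≤ w' →
      T s w ⊓ T t w' = 0 := by
    intro s t w w' hst hw hw'
    have hs : 0 ≤ s := hst ▸ inf_le_left
    have ht : 0 ≤ t := hst ▸ inf_le_right
    apply le_antisymm
    · calc T s w ⊓ T t w' ≤ T s (w + w') ⊓ T t (w + w') :=
          inf_le_inf (Tmono2 s hs (le_add_of_nonneg_right hw'))
            (Tmono2 t ht (le_add_of_nonneg_left hw))
        _ = T (s ⊓ t) (w + w') := (Tinf1 s t _ (add_nonneg hw hw')).symm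
        _ = 0 := by rw [hst]; simp
    · exact le_inf (Tpos s w hs hw) (Tpos t w' ht hw')
  have archzero : ∀ D C : B, (∀ n : ℕ, n • D ≤ C) → (∀ n : ℕ, n • (-D) ≤ C) → D = 0 := by
    intro D C h1 h2
    exact le_antisymm (hBarch D C h1) (neg_nonpos.1 (hBarch (-D) C h2))
  -- the core bounded case of the factorization
  have CBF : ∀ (x : A₁) (y : A₂), 0 ≤ x → x ≤ 1 → 0 ≤ y → y ≤ 1 →
      T x y = T x 1 * T 1 y := by
    intro x y hx0 hx1 hy0 hy1
    have hQ0 : 0 ≤ T 1 y := Tpos _ _ h1A₁ hy0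
    have hQ1 : T 1 y ≤ 1 := by rw [← hunit]; exact Tmono2 1 h1A₁ hy1
    have hPx0 : 0 ≤ T x 1 := Tpos _ _ hx0 h1A₂
    have hPx1 : T x 1 ≤ 1 := by rw [← hunit]; exact Tmono1 1 hx1 h1A₂
    rw [← sub_eq_zero]
    have key : ∀ n : ℕ, n • T x y - n • (T x 1 * T 1 y) ≤ 1 ∧
        n • (T x 1 * T 1 y) - n • T x y ≤ 1 := by
      intro n
      set u : ℕ → A₁ := fun k => (n • x - k • (1 : A₁))⁺ ⊓ 1 with hu_def
      set P : ℕ → B := fun k => (n • T x 1 - k • (1 : B))⁺ ⊓ 1 with hP_def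
      have hu0 : ∀ k, 0 ≤ u k := fun k => le_inf (posPart_nonneg _) h1A₁
      have hu1 : ∀ k, u k ≤ 1 := fun _ => inf_le_right
      have hP0 : ∀ k, 0 ≤ P k := fun k => le_inf (posPart_nonneg _) h1B
      have hP1 : ∀ k, P k ≤ 1 := fun _ => inf_le_right
      have hTu : ∀ k, T (u k) 1 = P k := by
        intro k
        show T ((n • x - k • (1 : A₁))⁺ ⊓ 1) 1 = (n • T x 1 - k • (1 : B))⁺ ⊓ 1
        rw [Tinf1 _ _ _ h1A₂, TposPart _ _ h1A₂, Tsub1, Tsmul1, Tsmul1, hunit]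
      have horthA : ∀ k, ((1 : A₁) - u k) ⊓ u (k + 1) = 0 := by
        intro k
        show ((1 : A₁) - (n • x - k • (1 : A₁))⁺ ⊓ 1) ⊓
          ((n • x - (k + 1) • (1 : A₁))⁺ ⊓ 1) = 0
        rw [succ_nsmul (1 : A₁) k, sub_add_eq_sub_sub]
        exact aux_orth _ _ h1A₁
      have horthB : ∀ k, ((1 : B) - P k) ⊓ P (k + 1) = 0 := by
        intro k
        show ((1 : B) - (n • T x 1 - k • (1 : B))⁺ ⊓ 1) ⊓
          ((n • T x 1 - (k + 1) • (1 : B))⁺ ⊓ 1) = 0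
        rw [succ_nsmul (1 : B) k, sub_add_eq_sub_sub]
        exact aux_orth _ _ h1B
      have hsum : ∑ k ∈ range n, u k = n • x := by
        calc ∑ k ∈ range n, u k = (n • x) ⊓ (n • (1 : A₁)) :=
              aux_partition _ _ h1A₁ (nsmul_nonneg hx0 n) n
          _ = n • x := inf_eq_left.2 (nsmul_le_nsmul_right hx1 n)
      have hsumP : ∑ k ∈ range n, P k = n • T x 1 := by
        calc ∑ k ∈ range n, P k = (n • T x 1) ⊓ (n • (1 : B)) :=
              aux_partition _ _ h1B (nsmul_nonneg hPx0 n) n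
          _ = n • T x 1 := inf_eq_left.2 (nsmul_le_nsmul_right hPx1 n)
      have hsand1 : ∀ k, P (k + 1) ⊓ T 1 y ≤ T (u k) y ∧ T (u k) y ≤ P k ⊓ T 1 y := by
        intro k
        constructor
        · have ha0 : 0 ≤ P (k + 1) ⊓ T 1 y := le_inf (hP0 _) hQ0
          have hb0 : 0 ≤ T (u k) y := Tpos _ _ (hu0 k) hy0
          have hg0 : 0 ≤ T (1 - u k) y := Tpos _ _ (sub_nonneg.2 (hu1 k)) hy0
          have hbg : T (u k) y + T (1 - u k) y = T 1 y := by
            rw [← Tadd1, add_sub_cancel]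
          have hle : P (k + 1) ⊓ T 1 y ≤ T (u k) y + T (1 - u k) y := by
            rw [hbg]; exact inf_le_right
          have horth' : (P (k + 1) ⊓ T 1 y) ⊓ T (1 - u k) y = 0 := by
            apply le_antisymm
            · calc (P (k + 1) ⊓ T 1 y) ⊓ T (1 - u k) y
                  ≤ P (k + 1) ⊓ T (1 - u k) y := inf_le_inf_right _ inf_le_left
                _ = T (u (k + 1)) 1 ⊓ T (1 - u k) y := by rw [hTu]
                _ = 0 := Torth _ _ _ _ (by rw [inf_comm]; exact horthA k) h1A₂ hy0
            · exact le_inf ha0 hg0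
          exact aux_R ha0 hb0 hg0 hle horth'
        · refine le_inf ?_ (Tmono1 y (hu1 k) hy0)
          rw [← hTu k]; exact Tmono2 _ (hu0 k) hy1
      have hsand2 : ∀ k, P (k + 1) ⊓ T 1 y ≤ P k * T 1 y ∧ P k * T 1 y ≤ P k ⊓ T 1 y :=
        fun k => aux_piece_mul hBmulpos hBfalg (hP0 k) (hP1 k) (hP0 (k + 1))
          (horthB k) hQ0 hQ1
      have hTn : n • T x y = ∑ k ∈ range n, T (u k) y := by
        rw [← Tsmul1 n x y, ← hsum, Tsum1]
      have hPn : n • (T x 1 * T 1 y) = ∑ k ∈ range n, P k * T 1 y := by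
        have h7 : n • (T x 1 * T 1 y) = (n • T x 1) * T 1 y := by
          rw [nsmul_eq_mul, nsmul_eq_mul, mul_assoc]
        rw [h7, ← hsumP, Finset.sum_mul]
      have hub1 : n • T x y ≤ ∑ k ∈ range n, (P k ⊓ T 1 y) := by
        rw [hTn]; exact aux_sum_le_sum n _ _ fun k => (hsand1 k).2
      have hlb1 : ∑ k ∈ range n, (P (k + 1) ⊓ T 1 y) ≤ n • T x y := by
        rw [hTn]; exact aux_sum_le_sum n _ _ fun k => (hsand1 k).1
      have hub2 : n • (T x 1 * T 1 y) ≤ ∑ k ∈ range n, (P k ⊓ T 1 y) := by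
        rw [hPn]; exact aux_sum_le_sum n _ _ fun k => (hsand2 k).2
      have hlb2 : ∑ k ∈ range n, (P (k + 1) ⊓ T 1 y) ≤ n • (T x 1 * T 1 y) := by
        rw [hPn]; exact aux_sum_le_sum n _ _ fun k => (hsand2 k).1
      have htel : ∑ k ∈ range n, (P k ⊓ T 1 y) - ∑ k ∈ range n, (P (k + 1) ⊓ T 1 y)
          = (P 0 ⊓ T 1 y) - (P n ⊓ T 1 y) := by
        have h8 := Finset.sum_range_succ' (fun k => P k ⊓ T 1 y) n
        have h9 := Finset.sum_range_succ (fun k => P k ⊓ T 1 y) n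
        rw [h9] at h8
        refine sub_eq_sub_iff_add_eq_add.2 ?_
        rw [h8, add_comm]
      have hd : (P 0 ⊓ T 1 y) - (P n ⊓ T 1 y) ≤ 1 := by
        calc (P 0 ⊓ T 1 y) - (P n ⊓ T 1 y) ≤ (P 0 ⊓ T 1 y) - 0 :=
              sub_le_sub_left (le_inf (hP0 n) hQ0) _
          _ = P 0 ⊓ T 1 y := sub_zero _
          _ ≤ T 1 y := inf_le_right
          _ ≤ 1 := hQ1
      constructor
      · calc n • T x y - n • (T x 1 * T 1 y)
            ≤ ∑ k ∈ range n, (P k ⊓ T 1 y) - ∑ k ∈ range n, (P (k + 1) ⊓ T 1 y) :=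
              sub_le_sub hub1 hlb2
          _ = (P 0 ⊓ T 1 y) - (P n ⊓ T 1 y) := htel
          _ ≤ 1 := hd
      · calc n • (T x 1 * T 1 y) - n • T x y
            ≤ ∑ k ∈ range n, (P k ⊓ T 1 y) - ∑ k ∈ range n, (P (k + 1) ⊓ T 1 y) :=
              sub_le_sub hub2 hlb1
          _ = (P 0 ⊓ T 1 y) - (P n ⊓ T 1 y) := htel
          _ ≤ 1 := hd
    refine archzero _ 1 (fun n => ?_) (fun n => ?_)
    · rw [nsmul_sub]; exact (key n).1
    · rw [neg_sub, nsmul_sub]; exact (key n).2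
  -- extension to `[0, M • 1]` by additivity
  have CBFM : ∀ (M : ℕ) (x : A₁) (y : A₂), 0 ≤ x → x ≤ M • 1 → 0 ≤ y → y ≤ M • 1 →
      T x y = T x 1 * T 1 y := by
    intro M x y hx0 hx1 hy0 hy1
    set xi : ℕ → A₁ := fun i => (x - i • (1 : A₁))⁺ ⊓ 1 with hxi_def
    set yj : ℕ → A₂ := fun j => (y - j • (1 : A₂))⁺ ⊓ 1 with hyj_def
    have hxi0 : ∀ i, 0 ≤ xi i := fun i => le_inf (posPart_nonneg _) h1A₁
    have hxi1 : ∀ i, xi i ≤ 1 := fun _ => inf_le_right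
    have hyj0 : ∀ j, 0 ≤ yj j := fun j => le_inf (posPart_nonneg _) h1A₂
    have hyj1 : ∀ j, yj j ≤ 1 := fun _ => inf_le_right
    have hxsum : ∑ i ∈ range M, xi i = x := by
      calc ∑ i ∈ range M, xi i = x ⊓ (M • 1) := aux_partition _ _ h1A₁ hx0 M
        _ = x := inf_eq_left.2 hx1
    have hysum : ∑ j ∈ range M, yj j = y := by
      calc ∑ j ∈ range M, yj j = y ⊓ (M • 1) := aux_partition _ _ h1A₂ hy0 M
        _ = y := inf_eq_left.2 hy1
    calc T x y = T (∑ i ∈ range M, xi i) (∑ j ∈ range M, yj j) := by rw [hxsum, hysum]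
      _ = ∑ i ∈ range M, ∑ j ∈ range M, T (xi i) (yj j) := by
          rw [Tsum1]
          exact Finset.sum_congr rfl fun i _ => Tsum2 M yj (xi i)
      _ = ∑ i ∈ range M, ∑ j ∈ range M, T (xi i) 1 * T 1 (yj j) := by
          refine Finset.sum_congr rfl fun i _ => Finset.sum_congr rfl fun j _ => ?_
          exact CBF _ _ (hxi0 i) (hxi1 i) (hyj0 j) (hyj1 j)
      _ = (∑ i ∈ range M, T (xi i) 1) * (∑ j ∈ range M, T 1 (yj j)) :=
          (Finset.sum_mul_sum _ _ _ _).symm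
      _ = T x 1 * T 1 y := by rw [← Tsum1, ← Tsum2, hxsum, hysum]
  -- extension to all nonnegative elements by truncation
  have Fplus : ∀ (x : A₁) (y : A₂), 0 ≤ x → 0 ≤ y → T x y = T x 1 * T 1 y := by
    intro x y hx hy
    rw [← sub_eq_zero]
    have hyy : (0 : A₂) ≤ y * y := h₂mulpos _ _ hy hy
    have hxx : (0 : A₁) ≤ x * x := h₁mulpos _ _ hx hx
    have key : ∀ m : ℕ,
        m • (T x y - T x 1 * T 1 y) ≤
          (T x (y * y) + T (x * x) y) + (T x 1 * T 1 (y * y) + T (x * x) 1 * T 1 y) ∧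
        m • (-(T x y - T x 1 * T 1 y)) ≤
          (T x (y * y) + T (x * x) y) + (T x 1 * T 1 (y * y) + T (x * x) 1 * T 1 y) := by
      intro m
      set xm : A₁ := x ⊓ m • 1 with hxm_def
      set r : A₁ := (x - m • (1 : A₁))⁺ with hr_def
      set ym : A₂ := y ⊓ m • 1 with hym_def
      set s : A₂ := (y - m • (1 : A₂))⁺ with hs_def
      have hxm : xm + r = x := by
        have h := inf_eq_sub_posPart_sub x (m • (1 : A₁))
        show x ⊓ m • 1 + (x - m • (1 : A₁))⁺ = x
        rw [h, sub_add_cancel]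
      have hym : ym + s = y := by
        have h := inf_eq_sub_posPart_sub y (m • (1 : A₂))
        show y ⊓ m • 1 + (y - m • (1 : A₂))⁺ = y
        rw [h, sub_add_cancel]
      have hxm0 : 0 ≤ xm := le_inf hx (nsmul_nonneg h1A₁ m)
      have hym0 : 0 ≤ ym := le_inf hy (nsmul_nonneg h1A₂ m)
      have hr0 : 0 ≤ r := posPart_nonneg _
      have hs0 : 0 ≤ s := posPart_nonneg _
      have hr_tail : m • r ≤ x * x := aux_tail h₁mulpos h₁falg hx m
      have hs_tail : m • s ≤ y * y := aux_tail h₂mulpos h₂falg hy m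
      have e1 : T x y = T xm ym + T xm s + T r y := by
        calc T x y = T (xm + r) y := by rw [hxm]
          _ = T xm y + T r y := Tadd1 _ _ _
          _ = T xm (ym + s) + T r y := by rw [hym]
          _ = T xm ym + T xm s + T r y := by rw [Tadd2]
      have e2 : T x 1 * T 1 y = T xm 1 * T 1 ym + T xm 1 * T 1 s + T r 1 * T 1 y := by
        calc T x 1 * T 1 y = (T xm 1 + T r 1) * T 1 y := by rw [← Tadd1, hxm]
          _ = T xm 1 * T 1 y + T r 1 * T 1 y := add_mul _ _ _
          _ = T xm 1 * (T 1 ym + T 1 s) + T r 1 * T 1 y := by rw [← Tadd2, hym]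
          _ = T xm 1 * T 1 ym + T xm 1 * T 1 s + T r 1 * T 1 y := by rw [mul_add]
      have e3 : T xm ym = T xm 1 * T 1 ym :=
        CBFM m xm ym hxm0 inf_le_right hym0 inf_le_right
      have hD : T x y - T x 1 * T 1 y =
          (T xm s + T r y) - (T xm 1 * T 1 s + T r 1 * T 1 y) := by
        rw [e1, e2, e3]; abel
      have b1 : m • T xm s ≤ T x (y * y) := by
        rw [← Tsmul2]
        calc T xm (m • s) ≤ T xm (y * y) := Tmono2 _ hxm0 hs_tail
          _ ≤ T x (y * y) := Tmono1 _ inf_le_left hyy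
      have b2 : m • T r y ≤ T (x * x) y := by
        rw [← Tsmul1]
        exact Tmono1 _ hr_tail hy
      have b3 : m • (T xm 1 * T 1 s) ≤ T x 1 * T 1 (y * y) := by
        rw [← mul_smul_comm, ← Tsmul2]
        exact aux_mul_mono hBmulpos (Tpos _ _ hxm0 h1A₂)
          (Tpos _ _ h1A₁ (nsmul_nonneg hs0 m)) (Tmono1 _ inf_le_left h1A₂)
          (Tmono2 _ h1A₁ hs_tail)
      have b4 : m • (T r 1 * T 1 y) ≤ T (x * x) 1 * T 1 y := by
        have h7 : m • (T r 1 * T 1 y) = (m • T r 1) * T 1 y := by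
          rw [nsmul_eq_mul, nsmul_eq_mul, mul_assoc]
        rw [h7, ← Tsmul1]
        exact aux_mul_mono hBmulpos (Tpos _ _ (nsmul_nonneg hr0 m) h1A₂)
          (Tpos _ _ h1A₁ hy) (Tmono1 _ hr_tail h1A₂) le_rfl
      have p1 : 0 ≤ T xm s := Tpos _ _ hxm0 hs0
      have p2 : 0 ≤ T r y := Tpos _ _ hr0 hy
      have p3 : 0 ≤ T xm 1 * T 1 s := hBmulpos _ _ (Tpos _ _ hxm0 h1A₂) (Tpos _ _ h1A₁ hs0)
      have p4 : 0 ≤ T r 1 * T 1 y := hBmulpos _ _ (Tpos _ _ hr0 h1A₂) (Tpos _ _ h1A₁ hy)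
      have q12 : 0 ≤ T x (y * y) + T (x * x) y :=
        add_nonneg (Tpos _ _ hx hyy) (Tpos _ _ hxx hy)
      have q34 : 0 ≤ T x 1 * T 1 (y * y) + T (x * x) 1 * T 1 y :=
        add_nonneg (hBmulpos _ _ (Tpos _ _ hx h1A₂) (Tpos _ _ h1A₁ hyy))
          (hBmulpos _ _ (Tpos _ _ hxx h1A₂) (Tpos _ _ h1A₁ hy))
      constructor
      · calc m • (T x y - T x 1 * T 1 y)
            = (m • T xm s + m • T r y) - (m • (T xm 1 * T 1 s) + m • (T r 1 * T 1 y)) := by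
              rw [hD, nsmul_sub, nsmul_add, nsmul_add]
          _ ≤ (m • T xm s + m • T r y) - 0 :=
              sub_le_sub_left (add_nonneg (nsmul_nonneg p3 m) (nsmul_nonneg p4 m)) _
          _ = m • T xm s + m • T r y := sub_zero _
          _ ≤ T x (y * y) + T (x * x) y := aux_add_le_add b1 b2
          _ ≤ _ := le_add_of_nonneg_right q34
      · calc m • (-(T x y - T x 1 * T 1 y))
            = (m • (T xm 1 * T 1 s) + m • (T r 1 * T 1 y)) - (m • T xm s + m • T r y) := by
              rw [hD, neg_sub, nsmul_sub, nsmul_add, nsmul_add]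
          _ ≤ (m • (T xm 1 * T 1 s) + m • (T r 1 * T 1 y)) - 0 :=
              sub_le_sub_left (add_nonneg (nsmul_nonneg p1 m) (nsmul_nonneg p2 m)) _
          _ = m • (T xm 1 * T 1 s) + m • (T r 1 * T 1 y) := sub_zero _
          _ ≤ T x 1 * T 1 (y * y) + T (x * x) 1 * T 1 y := aux_add_le_add b3 b4
          _ ≤ _ := le_add_of_nonneg_left q12
    exact archzero _ _ (fun m => (key m).1) (fun m => (key m).2)
  -- extension to arbitrary elements
  have Fall : ∀ (x : A₁) (y : A₂), T x y = T x 1 * T 1 y := by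
    intro x y
    have hx := posPart_sub_negPart x
    have hy := posPart_sub_negPart y
    calc T x y = T (x⁺ - x⁻) (y⁺ - y⁻) := by rw [hx, hy]
      _ = (T x⁺ y⁺ - T x⁺ y⁻) - (T x⁻ y⁺ - T x⁻ y⁻) := by
          rw [Tsub1, Tsub2, Tsub2]
      _ = ((T x⁺ 1 * T 1 y⁺) - (T x⁺ 1 * T 1 y⁻)) -
          ((T x⁻ 1 * T 1 y⁺) - (T x⁻ 1 * T 1 y⁻)) := by
          rw [Fplus x⁺ y⁺ (posPart_nonneg x) (posPart_nonneg y),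
            Fplus x⁺ y⁻ (posPart_nonneg x) (negPart_nonneg y),
            Fplus x⁻ y⁺ (negPart_nonneg x) (posPart_nonneg y),
            Fplus x⁻ y⁻ (negPart_nonneg x) (negPart_nonneg y)]
      _ = (T x⁺ 1 - T x⁻ 1) * (T 1 y⁺ - T 1 y⁻) := by
          rw [sub_mul, mul_sub, mul_sub]
      _ = T x 1 * T 1 y := by rw [← Tsub1, ← Tsub2, hx, hy]
  -- core bounded case of multiplicativity of `x ↦ T x 1`
  have CBM : ∀ x y : A₁, 0 ≤ x → x ≤ 1 → 0 ≤ y → y ≤ 1 →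
      T (x * y) 1 = T x 1 * T y 1 := by
    intro x y hx0 hx1 hy0 hy1
    have hQ0 : 0 ≤ T y 1 := Tpos _ _ hy0 h1A₂
    have hQ1 : T y 1 ≤ 1 := by rw [← hunit]; exact Tmono1 1 hy1 h1A₂
    have hPx0 : 0 ≤ T x 1 := Tpos _ _ hx0 h1A₂
    have hPx1 : T x 1 ≤ 1 := by rw [← hunit]; exact Tmono1 1 hx1 h1A₂
    rw [← sub_eq_zero]
    have key : ∀ n : ℕ, n • T (x * y) 1 - n • (T x 1 * T y 1) ≤ 1 ∧
        n • (T x 1 * T y 1) - n • T (x * y) 1 ≤ 1 := by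
      intro n
      set u : ℕ → A₁ := fun k => (n • x - k • (1 : A₁))⁺ ⊓ 1 with hu_def
      set P : ℕ → B := fun k => (n • T x 1 - k • (1 : B))⁺ ⊓ 1 with hP_def
      have hu0 : ∀ k, 0 ≤ u k := fun k => le_inf (posPart_nonneg _) h1A₁
      have hu1 : ∀ k, u k ≤ 1 := fun _ => inf_le_right
      have hP0 : ∀ k, 0 ≤ P k := fun k => le_inf (posPart_nonneg _) h1B
      have hP1 : ∀ k, P k ≤ 1 := fun _ => inf_le_right
      have hTu : ∀ k, T (u k) 1 = P k := by
        intro k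
        show T ((n • x - k • (1 : A₁))⁺ ⊓ 1) 1 = (n • T x 1 - k • (1 : B))⁺ ⊓ 1
        rw [Tinf1 _ _ _ h1A₂, TposPart _ _ h1A₂, Tsub1, Tsmul1, Tsmul1, hunit]
      have horthA : ∀ k, ((1 : A₁) - u k) ⊓ u (k + 1) = 0 := by
        intro k
        show ((1 : A₁) - (n • x - k • (1 : A₁))⁺ ⊓ 1) ⊓
          ((n • x - (k + 1) • (1 : A₁))⁺ ⊓ 1) = 0
        rw [succ_nsmul (1 : A₁) k, sub_add_eq_sub_sub]
        exact aux_orth _ _ h1A₁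
      have horthB : ∀ k, ((1 : B) - P k) ⊓ P (k + 1) = 0 := by
        intro k
        show ((1 : B) - (n • T x 1 - k • (1 : B))⁺ ⊓ 1) ⊓
          ((n • T x 1 - (k + 1) • (1 : B))⁺ ⊓ 1) = 0
        rw [succ_nsmul (1 : B) k, sub_add_eq_sub_sub]
        exact aux_orth _ _ h1B
      have hsum : ∑ k ∈ range n, u k = n • x := by
        calc ∑ k ∈ range n, u k = (n • x) ⊓ (n • (1 : A₁)) :=
              aux_partition _ _ h1A₁ (nsmul_nonneg hx0 n) n
          _ = n • x := inf_eq_left.2 (nsmul_le_nsmul_right hx1 n)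
      have hsumP : ∑ k ∈ range n, P k = n • T x 1 := by
        calc ∑ k ∈ range n, P k = (n • T x 1) ⊓ (n • (1 : B)) :=
              aux_partition _ _ h1B (nsmul_nonneg hPx0 n) n
          _ = n • T x 1 := inf_eq_left.2 (nsmul_le_nsmul_right hPx1 n)
      have hsand1 : ∀ k, P (k + 1) ⊓ T y 1 ≤ T (u k * y) 1 ∧
          T (u k * y) 1 ≤ P k ⊓ T y 1 := by
        intro k
        have hs := aux_piece_mul h₁mulpos h₁falg (hu0 k) (hu1 k) (hu0 (k + 1))
          (horthA k) hy0 hy1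
        constructor
        · have h10 : P (k + 1) ⊓ T y 1 = T (u (k + 1) ⊓ y) 1 := by
            rw [Tinf1 _ _ _ h1A₂, hTu]
          rw [h10]
          exact Tmono1 1 hs.1 h1A₂
        · calc T (u k * y) 1 ≤ T (u k ⊓ y) 1 := Tmono1 1 hs.2 h1A₂
            _ = P k ⊓ T y 1 := by rw [Tinf1 _ _ _ h1A₂, hTu]
      have hsand2 : ∀ k, P (k + 1) ⊓ T y 1 ≤ P k * T y 1 ∧ P k * T y 1 ≤ P k ⊓ T y 1 :=
        fun k => aux_piece_mul hBmulpos hBfalg (hP0 k) (hP1 k) (hP0 (k + 1))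
          (horthB k) hQ0 hQ1
      have hTn : n • T (x * y) 1 = ∑ k ∈ range n, T (u k * y) 1 := by
        have hmm : n • (x * y) = (∑ k ∈ range n, u k) * y := by
          rw [hsum, nsmul_eq_mul, nsmul_eq_mul, mul_assoc]
        rw [← Tsmul1, hmm, Finset.sum_mul, Tsum1]
      have hPn : n • (T x 1 * T y 1) = ∑ k ∈ range n, P k * T y 1 := by
        have h7 : n • (T x 1 * T y 1) = (n • T x 1) * T y 1 := by
          rw [nsmul_eq_mul, nsmul_eq_mul, mul_assoc]
        rw [h7, ← hsumP, Finset.sum_mul]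
      have hub1 : n • T (x * y) 1 ≤ ∑ k ∈ range n, (P k ⊓ T y 1) := by
        rw [hTn]; exact aux_sum_le_sum n _ _ fun k => (hsand1 k).2
      have hlb1 : ∑ k ∈ range n, (P (k + 1) ⊓ T y 1) ≤ n • T (x * y) 1 := by
        rw [hTn]; exact aux_sum_le_sum n _ _ fun k => (hsand1 k).1
      have hub2 : n • (T x 1 * T y 1) ≤ ∑ k ∈ range n, (P k ⊓ T y 1) := by
        rw [hPn]; exact aux_sum_le_sum n _ _ fun k => (hsand2 k).2
      have hlb2 : ∑ k ∈ range n, (P (k + 1) ⊓ T y 1) ≤ n • (T x 1 * T y 1) := by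
        rw [hPn]; exact aux_sum_le_sum n _ _ fun k => (hsand2 k).1
      have htel : ∑ k ∈ range n, (P k ⊓ T y 1) - ∑ k ∈ range n, (P (k + 1) ⊓ T y 1)
          = (P 0 ⊓ T y 1) - (P n ⊓ T y 1) := by
        have h8 := Finset.sum_range_succ' (fun k => P k ⊓ T y 1) n
        have h9 := Finset.sum_range_succ (fun k => P k ⊓ T y 1) n
        rw [h9] at h8
        refine sub_eq_sub_iff_add_eq_add.2 ?_
        rw [h8, add_comm]
      have hd : (P 0 ⊓ T y 1) - (P n ⊓ T y 1) ≤ 1 := by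
        calc (P 0 ⊓ T y 1) - (P n ⊓ T y 1) ≤ (P 0 ⊓ T y 1) - 0 :=
              sub_le_sub_left (le_inf (hP0 n) hQ0) _
          _ = P 0 ⊓ T y 1 := sub_zero _
          _ ≤ T y 1 := inf_le_right
          _ ≤ 1 := hQ1
      exact ⟨((sub_le_sub hub1 hlb2).trans (le_of_eq htel)).trans hd,
        ((sub_le_sub hub2 hlb1).trans (le_of_eq htel)).trans hd⟩
    refine archzero _ 1 (fun n => ?_) (fun n => ?_)
    · rw [nsmul_sub]; exact (key n).1
    · rw [neg_sub, nsmul_sub]; exact (key n).2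
  -- extension to `[0, M • 1]`
  have CBMM : ∀ (M : ℕ) (x y : A₁), 0 ≤ x → x ≤ M • 1 → 0 ≤ y → y ≤ M • 1 →
      T (x * y) 1 = T x 1 * T y 1 := by
    intro M x y hx0 hx1 hy0 hy1
    set xi : ℕ → A₁ := fun i => (x - i • (1 : A₁))⁺ ⊓ 1 with hxi_def
    set yj : ℕ → A₁ := fun j => (y - j • (1 : A₁))⁺ ⊓ 1 with hyj_def
    have hxi0 : ∀ i, 0 ≤ xi i := fun i => le_inf (posPart_nonneg _) h1A₁
    have hxi1 : ∀ i, xi i ≤ 1 := fun _ => inf_le_right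
    have hyj0 : ∀ j, 0 ≤ yj j := fun j => le_inf (posPart_nonneg _) h1A₁
    have hyj1 : ∀ j, yj j ≤ 1 := fun _ => inf_le_right
    have hxsum : ∑ i ∈ range M, xi i = x := by
      calc ∑ i ∈ range M, xi i = x ⊓ (M • 1) := aux_partition _ _ h1A₁ hx0 M
        _ = x := inf_eq_left.2 hx1
    have hysum : ∑ j ∈ range M, yj j = y := by
      calc ∑ j ∈ range M, yj j = y ⊓ (M • 1) := aux_partition _ _ h1A₁ hy0 M
        _ = y := inf_eq_left.2 hy1
    have hxy : x * y = ∑ i ∈ range M, ∑ j ∈ range M, xi i * yj j := by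
      rw [← hxsum, ← hysum, Finset.sum_mul_sum]
    calc T (x * y) 1 = ∑ i ∈ range M, ∑ j ∈ range M, T (xi i * yj j) 1 := by
          rw [hxy, Tsum1]
          exact Finset.sum_congr rfl fun i _ => Tsum1 M _ 1
      _ = ∑ i ∈ range M, ∑ j ∈ range M, T (xi i) 1 * T (yj j) 1 := by
          refine Finset.sum_congr rfl fun i _ => Finset.sum_congr rfl fun j _ => ?_
          exact CBM _ _ (hxi0 i) (hxi1 i) (hyj0 j) (hyj1 j)
      _ = (∑ i ∈ range M, T (xi i) 1) * (∑ j ∈ range M, T (yj j) 1) :=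
          (Finset.sum_mul_sum _ _ _ _).symm
      _ = T x 1 * T y 1 := by rw [← Tsum1, ← Tsum1, hxsum, hysum]
  -- extension to all nonnegative elements by truncation
  have Mplus : ∀ x y : A₁, 0 ≤ x → 0 ≤ y → T (x * y) 1 = T x 1 * T y 1 := by
    intro x y hx hy
    rw [← sub_eq_zero]
    have hyy : (0 : A₁) ≤ y * y := h₁mulpos _ _ hy hy
    have hxx : (0 : A₁) ≤ x * x := h₁mulpos _ _ hx hx
    have key : ∀ m : ℕ,
        m • (T (x * y) 1 - T x 1 * T y 1) ≤
          (T (x * (y * y)) 1 + T ((x * x) * y) 1) +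
            (T x 1 * T (y * y) 1 + T (x * x) 1 * T y 1) ∧
        m • (-(T (x * y) 1 - T x 1 * T y 1)) ≤
          (T (x * (y * y)) 1 + T ((x * x) * y) 1) +
            (T x 1 * T (y * y) 1 + T (x * x) 1 * T y 1) := by
      intro m
      set xm : A₁ := x ⊓ m • 1 with hxm_def
      set r : A₁ := (x - m • (1 : A₁))⁺ with hr_def
      set ym : A₁ := y ⊓ m • 1 with hym_def
      set s : A₁ := (y - m • (1 : A₁))⁺ with hs_def
      have hxm : xm + r = x := by
        have h := inf_eq_sub_posPart_sub x (m • (1 : A₁))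
        show x ⊓ m • 1 + (x - m • (1 : A₁))⁺ = x
        rw [h, sub_add_cancel]
      have hym : ym + s = y := by
        have h := inf_eq_sub_posPart_sub y (m • (1 : A₁))
        show y ⊓ m • 1 + (y - m • (1 : A₁))⁺ = y
        rw [h, sub_add_cancel]
      have hxm0 : 0 ≤ xm := le_inf hx (nsmul_nonneg h1A₁ m)
      have hym0 : 0 ≤ ym := le_inf hy (nsmul_nonneg h1A₁ m)
      have hr0 : 0 ≤ r := posPart_nonneg _
      have hs0 : 0 ≤ s := posPart_nonneg _
      have hr_tail : m • r ≤ x * x := aux_tail h₁mulpos h₁falg hx m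
      have hs_tail : m • s ≤ y * y := aux_tail h₁mulpos h₁falg hy m
      have e1 : T (x * y) 1 = T (xm * ym) 1 + T (xm * s) 1 + T (r * y) 1 := by
        have h0 : x * y = xm * ym + xm * s + r * y := by
          rw [← hxm, ← hym, add_mul, mul_add]
        rw [h0, Tadd1, Tadd1]
      have e2 : T x 1 * T y 1 =
          T xm 1 * T ym 1 + T xm 1 * T s 1 + T r 1 * T y 1 := by
        calc T x 1 * T y 1 = (T xm 1 + T r 1) * T y 1 := by rw [← Tadd1, hxm]
          _ = T xm 1 * T y 1 + T r 1 * T y 1 := add_mul _ _ _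
          _ = T xm 1 * (T ym 1 + T s 1) + T r 1 * T y 1 := by rw [← Tadd1, hym]
          _ = T xm 1 * T ym 1 + T xm 1 * T s 1 + T r 1 * T y 1 := by rw [mul_add]
      have e3 : T (xm * ym) 1 = T xm 1 * T ym 1 :=
        CBMM m xm ym hxm0 inf_le_right hym0 inf_le_right
      have hD : T (x * y) 1 - T x 1 * T y 1 =
          (T (xm * s) 1 + T (r * y) 1) - (T xm 1 * T s 1 + T r 1 * T y 1) := by
        rw [e1, e2, e3]; abel
      have b1 : m • T (xm * s) 1 ≤ T (x * (y * y)) 1 := by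
        rw [← Tsmul1]
        refine Tmono1 _ ?_ h1A₂
        calc m • (xm * s) = xm * (m • s) := (mul_smul_comm m xm s).symm
          _ ≤ x * (y * y) := aux_mul_mono h₁mulpos hxm0 (nsmul_nonneg hs0 m)
              inf_le_left hs_tail
      have b2 : m • T (r * y) 1 ≤ T ((x * x) * y) 1 := by
        rw [← Tsmul1]
        refine Tmono1 _ ?_ h1A₂
        calc m • (r * y) = (m • r) * y := by rw [nsmul_eq_mul, nsmul_eq_mul, mul_assoc]
          _ ≤ (x * x) * y := aux_mul_mono h₁mulpos (nsmul_nonneg hr0 m) hy hr_tail le_rfl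
      have b3 : m • (T xm 1 * T s 1) ≤ T x 1 * T (y * y) 1 := by
        rw [← mul_smul_comm, ← Tsmul1]
        exact aux_mul_mono hBmulpos (Tpos _ _ hxm0 h1A₂)
          (Tpos _ _ (nsmul_nonneg hs0 m) h1A₂) (Tmono1 _ inf_le_left h1A₂)
          (Tmono1 _ hs_tail h1A₂)
      have b4 : m • (T r 1 * T y 1) ≤ T (x * x) 1 * T y 1 := by
        have h7 : m • (T r 1 * T y 1) = (m • T r 1) * T y 1 := by
          rw [nsmul_eq_mul, nsmul_eq_mul, mul_assoc]
        rw [h7, ← Tsmul1]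
        exact aux_mul_mono hBmulpos (Tpos _ _ (nsmul_nonneg hr0 m) h1A₂)
          (Tpos _ _ hy h1A₂) (Tmono1 _ hr_tail h1A₂) le_rfl
      have p1 : 0 ≤ T (xm * s) 1 := Tpos _ _ (h₁mulpos _ _ hxm0 hs0) h1A₂
      have p2 : 0 ≤ T (r * y) 1 := Tpos _ _ (h₁mulpos _ _ hr0 hy) h1A₂
      have p3 : 0 ≤ T xm 1 * T s 1 :=
        hBmulpos _ _ (Tpos _ _ hxm0 h1A₂) (Tpos _ _ hs0 h1A₂)
      have p4 : 0 ≤ T r 1 * T y 1 :=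
        hBmulpos _ _ (Tpos _ _ hr0 h1A₂) (Tpos _ _ hy h1A₂)
      have q12 : 0 ≤ T (x * (y * y)) 1 + T ((x * x) * y) 1 :=
        add_nonneg (Tpos _ _ (h₁mulpos _ _ hx hyy) h1A₂)
          (Tpos _ _ (h₁mulpos _ _ hxx hy) h1A₂)
      have q34 : 0 ≤ T x 1 * T (y * y) 1 + T (x * x) 1 * T y 1 :=
        add_nonneg (hBmulpos _ _ (Tpos _ _ hx h1A₂) (Tpos _ _ hyy h1A₂))
          (hBmulpos _ _ (Tpos _ _ hxx h1A₂) (Tpos _ _ hy h1A₂))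
      constructor
      · calc m • (T (x * y) 1 - T x 1 * T y 1)
            = (m • T (xm * s) 1 + m • T (r * y) 1) -
              (m • (T xm 1 * T s 1) + m • (T r 1 * T y 1)) := by
              rw [hD, nsmul_sub, nsmul_add, nsmul_add]
          _ ≤ (m • T (xm * s) 1 + m • T (r * y) 1) - 0 :=
              sub_le_sub_left (add_nonneg (nsmul_nonneg p3 m) (nsmul_nonneg p4 m)) _
          _ = m • T (xm * s) 1 + m • T (r * y) 1 := sub_zero _
          _ ≤ T (x * (y * y)) 1 + T ((x * x) * y) 1 := aux_add_le_add b1 b2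
          _ ≤ _ := le_add_of_nonneg_right q34
      · calc m • (-(T (x * y) 1 - T x 1 * T y 1))
            = (m • (T xm 1 * T s 1) + m • (T r 1 * T y 1)) -
              (m • T (xm * s) 1 + m • T (r * y) 1) := by
              rw [hD, neg_sub, nsmul_sub, nsmul_add, nsmul_add]
          _ ≤ (m • (T xm 1 * T s 1) + m • (T r 1 * T y 1)) - 0 :=
              sub_le_sub_left (add_nonneg (nsmul_nonneg p1 m) (nsmul_nonneg p2 m)) _
          _ = m • (T xm 1 * T s 1) + m • (T r 1 * T y 1) := sub_zero _
          _ ≤ T x 1 * T (y * y) 1 + T (x * x) 1 * T y 1 := aux_add_le_add b3 b4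
          _ ≤ _ := le_add_of_nonneg_left q12
    exact archzero _ _ (fun m => (key m).1) (fun m => (key m).2)
  -- all signs
  have Mall : ∀ x y : A₁, T (x * y) 1 = T x 1 * T y 1 := by
    intro x y
    have hx := posPart_sub_negPart x
    have hy := posPart_sub_negPart y
    have hxy : x * y = (x⁺ * y⁺ - x⁺ * y⁻) - (x⁻ * y⁺ - x⁻ * y⁻) := by
      calc x * y = (x⁺ - x⁻) * (y⁺ - y⁻) := by rw [hx, hy]
        _ = x⁺ * (y⁺ - y⁻) - x⁻ * (y⁺ - y⁻) := sub_mul _ _ _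
        _ = (x⁺ * y⁺ - x⁺ * y⁻) - (x⁻ * y⁺ - x⁻ * y⁻) := by rw [mul_sub, mul_sub]
    calc T (x * y) 1
        = (T (x⁺ * y⁺) 1 - T (x⁺ * y⁻) 1) - (T (x⁻ * y⁺) 1 - T (x⁻ * y⁻) 1) := by
          rw [hxy, Tsub1, Tsub1, Tsub1]
      _ = ((T x⁺ 1 * T y⁺ 1) - (T x⁺ 1 * T y⁻ 1)) -
          ((T x⁻ 1 * T y⁺ 1) - (T x⁻ 1 * T y⁻ 1)) := by
          rw [Mplus x⁺ y⁺ (posPart_nonneg x) (posPart_nonneg y),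
            Mplus x⁺ y⁻ (posPart_nonneg x) (negPart_nonneg y),
            Mplus x⁻ y⁺ (negPart_nonneg x) (posPart_nonneg y),
            Mplus x⁻ y⁻ (negPart_nonneg x) (negPart_nonneg y)]
      _ = (T x⁺ 1 - T x⁻ 1) * (T y⁺ 1 - T y⁻ 1) := by
          rw [sub_mul, mul_sub, mul_sub]
      _ = T x 1 * T y 1 := by rw [← Tsub1, ← Tsub1, hx, hy]
  exact ⟨Fall, Mall⟩

end Master




/-- A lattice bimorphism between unital Archimedean f-algebras sending the pair
of units to the unit is a multiplicative bilinear map. -/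
theorem lattice_bimorphism_multiplicative
    {A₁ A₂ B : Type*}
    [Ring A₁] [Lattice A₁] [CovariantClass A₁ A₁ (· + ·) (· ≤ ·)] [Module ℝ A₁]
    [Ring A₂] [Lattice A₂] [CovariantClass A₂ A₂ (· + ·) (· ≤ ·)] [Module ℝ A₂]
    [Ring B] [Lattice B] [CovariantClass B B (· + ·) (· ≤ ·)] [Module ℝ B]
    (h₁mulpos : ∀ x y : A₁, 0 ≤ x → 0 ≤ y → 0 ≤ x * y)
    (h₁falg : ∀ f g h : A₁, f ⊓ g = 0 → 0 ≤ h → (f * h) ⊓ g = 0 ∧ (h * f) ⊓ g = 0)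
    (h₁arch : ∀ x y : A₁, (∀ n : ℕ, n • x ≤ y) → x ≤ 0)
    (h₂mulpos : ∀ x y : A₂, 0 ≤ x → 0 ≤ y → 0 ≤ x * y)
    (h₂falg : ∀ f g h : A₂, f ⊓ g = 0 → 0 ≤ h → (f * h) ⊓ g = 0 ∧ (h * f) ⊓ g = 0)
    (h₂arch : ∀ x y : A₂, (∀ n : ℕ, n • x ≤ y) → x ≤ 0)
    (hBmulpos : ∀ x y : B, 0 ≤ x → 0 ≤ y → 0 ≤ x * y)
    (hBfalg : ∀ f g h : B, f ⊓ g = 0 → 0 ≤ h → (f * h) ⊓ g = 0 ∧ (h * f) ⊓ g = 0)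
    (hBarch : ∀ x y : B, (∀ n : ℕ, n • x ≤ y) → x ≤ 0)
    (T : A₁ →ₗ[ℝ] A₂ →ₗ[ℝ] B)
    -- `T` is a lattice bimorphism:
    (hbim₁ : ∀ y : A₂, 0 ≤ y → ∀ x : A₁, T |x| y = |T x y|)
    (hbim₂ : ∀ x : A₁, 0 ≤ x → ∀ y : A₂, T x |y| = |T x y|)
    (hunit : T 1 1 = 1) :
    ∀ a₁ x₁ : A₁, ∀ a₂ x₂ : A₂,
      T (a₁ * x₁) (a₂ * x₂) = T a₁ a₂ * T x₁ x₂ := by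
  obtain ⟨F, M⟩ := aux_master h₁mulpos h₁falg h₂mulpos h₂falg hBmulpos hBfalg hBarch
    T hbim₁ hunit
  have hbim₁' : ∀ x : A₁, 0 ≤ x → ∀ y : A₂, T.flip |y| x = |T.flip y x| := by
    intro x hx y
    simp only [LinearMap.flip_apply]
    exact hbim₂ x hx y
  have hunit' : T.flip 1 1 = 1 := by
    simp only [LinearMap.flip_apply]; exact hunit
  obtain ⟨F', M'⟩ := aux_master h₂mulpos h₂falg h₁mulpos h₁falg hBmulpos hBfalg hBarch
    T.flip hbim₁' hunit'
  simp only [LinearMap.flip_apply] at F' M'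
  -- `F' : ∀ (y : A₂) (x : A₁), T x y = T 1 y * T x 1`
  -- `M' : ∀ (y y' : A₂), T 1 (y * y') = T 1 y * T 1 y'`
  have swap : ∀ (u : A₁) (v : A₂), T u 1 * T 1 v = T 1 v * T u 1 := by
    intro u v
    rw [← F u v, F' v u]
  intro a₁ x₁ a₂ x₂
  calc T (a₁ * x₁) (a₂ * x₂)
      = T (a₁ * x₁) 1 * T 1 (a₂ * x₂) := F _ _
    _ = (T a₁ 1 * T x₁ 1) * (T 1 a₂ * T 1 x₂) := by rw [M, M']
    _ = T a₁ 1 * ((T x₁ 1 * T 1 a₂) * T 1 x₂) := by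
        rw [mul_assoc, mul_assoc]
    _ = T a₁ 1 * ((T 1 a₂ * T x₁ 1) * T 1 x₂) := by rw [swap x₁ a₂]
    _ = (T a₁ 1 * T 1 a₂) * (T x₁ 1 * T 1 x₂) := by
        rw [mul_assoc, mul_assoc]
    _ = T a₁ a₂ * T x₁ x₂ := by rw [← F, ← F]
end

section
/- Let X and Y be compact Hausdorff spaces. The Riesz subspace of C(X × Y) generated by the algebraic tensor product C(X) ⊗ C(Y) (the set of functions (s,t) ↦ Σ fᵢ(s)gᵢ(t) with fᵢ ∈ C(X), gᵢ ∈ C(Y)) is a subalgebra of C(X × Y). -/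
open ContinuousMap in
/-- Auxiliary: pointwise |u*v| = |u|*|v| in C(Z, ℝ). -/
lemma cm_abs_mul {Z : Type*} [TopologicalSpace Z] (u v : C(Z, ℝ)) :
    |u * v| = |u| * |v| := by
  ext p
  simp [abs_mul]

/-- For compact Hausdorff `X`, `Y`, the Riesz subspace of `C(X × Y)` generated
by the algebraic tensor product `C(X) ⊗ C(Y)` (sums of products
`(s,t) ↦ f(s)g(t)`) is a subalgebra of `C(X × Y)`. -/
theorem rieszSubspace_of_tensor_is_subalgebra
    {X Y : Type*} [TopologicalSpace X] [CompactSpace X] [T2Space X]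
    [TopologicalSpace Y] [CompactSpace Y] [T2Space Y] :
    let tensor : Submodule ℝ C(X × Y, ℝ) :=
      Submodule.span ℝ
        {h : C(X × Y, ℝ) | ∃ f : C(X, ℝ), ∃ g : C(Y, ℝ), ∀ p : X × Y, h p = f p.1 * g p.2}
    let R : Submodule ℝ C(X × Y, ℝ) :=
      sInf {S : Submodule ℝ C(X × Y, ℝ) | tensor ≤ S ∧ ∀ u ∈ S, |u| ∈ S}
    ∀ u ∈ R, ∀ v ∈ R, u * v ∈ R := by
  intro tensor R
  -- notation for pure tensors
  set gens : Set C(X × Y, ℝ) :=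
    {h : C(X × Y, ℝ) | ∃ f : C(X, ℝ), ∃ g : C(Y, ℝ), ∀ p : X × Y, h p = f p.1 * g p.2} with hgens
  have hten : ∀ (f : C(X, ℝ)) (g : C(Y, ℝ)),
      (f.comp ContinuousMap.fst * g.comp ContinuousMap.snd) ∈ gens :=
    fun f g => ⟨f, g, fun p => rfl⟩
  have hT : tensor ≤ R := le_sInf fun S hS => hS.1
  have habs : ∀ w ∈ R, |w| ∈ R := fun w hw =>
    Submodule.mem_sInf.mpr fun S hS => hS.2 w (Submodule.mem_sInf.mp hw S hS)
  -- Lemma A : multiplication by a nonnegative pure tensor preserves R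
  have lemA : ∀ (f : C(X, ℝ)) (g : C(Y, ℝ)), 0 ≤ f → 0 ≤ g →
      ∀ v ∈ R, (f.comp ContinuousMap.fst * g.comp ContinuousMap.snd) * v ∈ R := by
    intro f g hf hg
    set c : C(X × Y, ℝ) := f.comp ContinuousMap.fst * g.comp ContinuousMap.snd with hc
    have hc0 : ∀ p : X × Y, 0 ≤ c p := fun p =>
      mul_nonneg (ContinuousMap.le_def.mp hf p.1) (ContinuousMap.le_def.mp hg p.2)
    set S : Submodule ℝ C(X × Y, ℝ) := R ⊓ Submodule.comap (LinearMap.mulLeft ℝ c) R with hS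
    have hmemS : ∀ w : C(X × Y, ℝ), w ∈ S ↔ w ∈ R ∧ c * w ∈ R := by
      intro w
      simp [hS, Submodule.mem_inf, Submodule.mem_comap, LinearMap.mulLeft_apply]
    have h1 : tensor ≤ S := by
      rw [show tensor = Submodule.span ℝ gens from rfl, Submodule.span_le]
      rintro h ⟨f', g', hfg'⟩
      refine (hmemS h).mpr ⟨hT (Submodule.subset_span ⟨f', g', hfg'⟩), hT ?_⟩
      refine Submodule.subset_span ⟨f * f', g * g', fun p => ?_⟩
      simp [hc, hfg' p]
      ring
    have h2 : ∀ w ∈ S, |w| ∈ S := by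
      intro w hw
      rcases (hmemS w).mp hw with ⟨hw1, hw2⟩
      refine (hmemS |w|).mpr ⟨habs w hw1, ?_⟩
      have : c * |w| = |c * w| := by
        rw [cm_abs_mul]
        congr 1
        ext p
        exact (abs_of_nonneg (hc0 p)).symm
      rw [this]
      exact habs _ hw2
    have hRS : R ≤ S := sInf_le ⟨h1, h2⟩
    intro v hv
    exact ((hmemS v).mp (hRS hv)).2
  -- decomposition into positive and negative parts (inside R)
  have posneg : ∀ w : C(X × Y, ℝ), w ∈ R →
      ∃ P N : C(X × Y, ℝ), P ∈ R ∧ N ∈ R ∧ (∀ p, 0 ≤ P p) ∧ (∀ p, 0 ≤ N p) ∧ w = P - N := by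
    intro w hw
    refine ⟨(2⁻¹ : ℝ) • (w + |w|), (2⁻¹ : ℝ) • (|w| - w),
      Submodule.smul_mem _ _ (Submodule.add_mem _ hw (habs w hw)),
      Submodule.smul_mem _ _ (Submodule.sub_mem _ (habs w hw) hw), ?_, ?_, ?_⟩
    · intro p
      have := neg_abs_le (w p)
      simp [ContinuousMap.abs_apply]
      linarith
    · intro p
      have := le_abs_self (w p)
      simp [ContinuousMap.abs_apply]
      linarith
    · ext p
      simp
      ring
  -- Lemma B : multiplication by any element of tensor preserves R
  have lemB : ∀ a ∈ tensor, ∀ v ∈ R, a * v ∈ R := by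
    intro a ha v hv
    induction ha using Submodule.span_induction with
    | mem h hh =>
      rcases hh with ⟨f, g, hfg⟩
      -- split f and g into nonnegative parts
      set fp : C(X, ℝ) := (2⁻¹ : ℝ) • (f + |f|) with hfp
      set fn : C(X, ℝ) := (2⁻¹ : ℝ) • (|f| - f) with hfn
      set gp : C(Y, ℝ) := (2⁻¹ : ℝ) • (g + |g|) with hgp
      set gn : C(Y, ℝ) := (2⁻¹ : ℝ) • (|g| - g) with hgn
      have hfp0 : 0 ≤ fp := ContinuousMap.le_def.mpr fun x => by
        have := neg_abs_le (f x); simp [hfp]; linarith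
      have hfn0 : 0 ≤ fn := ContinuousMap.le_def.mpr fun x => by
        have := le_abs_self (f x); simp [hfn]; linarith
      have hgp0 : 0 ≤ gp := ContinuousMap.le_def.mpr fun y => by
        have := neg_abs_le (g y); simp [hgp]; linarith
      have hgn0 : 0 ≤ gn := ContinuousMap.le_def.mpr fun y => by
        have := le_abs_self (g y); simp [hgn]; linarith
      have hdecomp : h = fp.comp ContinuousMap.fst * gp.comp ContinuousMap.snd
          - fp.comp ContinuousMap.fst * gn.comp ContinuousMap.snd
          - fn.comp ContinuousMap.fst * gp.comp ContinuousMap.snd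
          + fn.comp ContinuousMap.fst * gn.comp ContinuousMap.snd := by
        ext p
        simp [hfg p, hfp, hfn, hgp, hgn]
        ring
      rw [hdecomp]
      rw [add_mul, sub_mul, sub_mul]
      exact Submodule.add_mem _
        (Submodule.sub_mem _
          (Submodule.sub_mem _ (lemA fp gp hfp0 hgp0 v hv) (lemA fp gn hfp0 hgn0 v hv))
          (lemA fn gp hfn0 hgp0 v hv))
        (lemA fn gn hfn0 hgn0 v hv)
    | zero => simp only [zero_mul]; exact Submodule.zero_mem R
    | add x y hx hy ihx ihy =>
      rw [add_mul]
      exact Submodule.add_mem _ ihx ihy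
    | smul r x hx ihx =>
      rw [smul_mul_assoc]
      exact Submodule.smul_mem _ _ ihx
  -- Main step: the set of universal multipliers in R is in the defining family
  set T : Submodule ℝ C(X × Y, ℝ) :=
    R ⊓ ⨅ (v : C(X × Y, ℝ)) (_ : v ∈ R), Submodule.comap (LinearMap.mulRight ℝ v) R with hTdef
  have hmemT : ∀ u : C(X × Y, ℝ), u ∈ T ↔ u ∈ R ∧ ∀ v ∈ R, u * v ∈ R := by
    intro u
    simp [hTdef, Submodule.mem_inf, Submodule.mem_iInf, Submodule.mem_comap,
      LinearMap.mulRight_apply]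
  have h1 : tensor ≤ T := fun a ha => (hmemT a).mpr ⟨hT ha, fun v hv => lemB a ha v hv⟩
  have h2 : ∀ u ∈ T, |u| ∈ T := by
    intro u hu
    rcases (hmemT u).mp hu with ⟨hu1, hu2⟩
    refine (hmemT |u|).mpr ⟨habs u hu1, ?_⟩
    intro v hv
    rcases posneg v hv with ⟨P, N, hP, hN, hP0, hN0, hvPN⟩
    have key : ∀ w : C(X × Y, ℝ), w ∈ R → (∀ p, 0 ≤ w p) → |u| * w ∈ R := by
      intro w hwR hw0
      have : |u| * w = |u * w| := by
        rw [cm_abs_mul]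
        congr 1
        ext p
        exact (abs_of_nonneg (hw0 p)).symm
      rw [this]
      exact habs _ (hu2 w hwR)
    rw [hvPN, mul_sub]
    exact Submodule.sub_mem _ (key P hP hP0) (key N hN hN0)
  have hRT : R ≤ T := sInf_le ⟨h1, h2⟩
  intro u hu v hv
  exact ((hmemT u).mp (hRT hu)).2 v hv
end

section
/- In a semiprime f-algebra, for all a, b the element a⁻b⁻ is disjoint from z = (a + a³)⁺ + (b + b³)⁺, i.e., (a⁻b⁻) ∧ z = 0; consequently (ab)⁺ ∧ z = a⁺b⁺ ∧ z. -/
section Aux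

variable {A : Type*} [Ring A] [Lattice A] [CovariantClass A A (· + ·) (· ≤ ·)]

private theorem aux_swap : CovariantClass A A (Function.swap (· + ·)) (· ≤ ·) :=
  ⟨fun a b c h => by simpa [add_comm] using add_le_add_left h a⟩

/-- subadditivity of inf for nonnegative elements -/
private theorem aux_inf_subadd (x y z : A) (hx : 0 ≤ x) (hy : 0 ≤ y) (hz : 0 ≤ z) :
    (x + y) ⊓ z ≤ x ⊓ z + y ⊓ z := by
  haveI := aux_swap (A := A)
  have h1 : x ⊓ z + y ⊓ z = ((x + y) ⊓ (x + z)) ⊓ ((z + y) ⊓ (z + z)) := by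
    rw [inf_add, add_inf, add_inf]
  rw [h1]
  refine le_inf (le_inf inf_le_left ?_) (le_inf ?_ ?_)
  · exact inf_le_right.trans (le_add_of_nonneg_left hx)
  · exact inf_le_right.trans (le_add_of_nonneg_right hy)
  · exact inf_le_right.trans (le_add_of_nonneg_left hz)

private theorem aux_disj_add (x y z : A) (hx : 0 ≤ x) (hy : 0 ≤ y) (hz : 0 ≤ z)
    (hxz : x ⊓ z = 0) (hyz : y ⊓ z = 0) : (x + y) ⊓ z = 0 := by
  have h := aux_inf_subadd x y z hx hy hz
  rw [hxz, hyz, add_zero] at h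
  exact le_antisymm h (le_inf (add_nonneg hx hy) hz)

private theorem aux_disj_add' (x y z : A) (hx : 0 ≤ x) (hy : 0 ≤ y) (hz : 0 ≤ z)
    (hxy : x ⊓ y = 0) (hxz : x ⊓ z = 0) : x ⊓ (y + z) = 0 := by
  rw [inf_comm]
  exact aux_disj_add y z x hy hz hx (by rw [inf_comm]; exact hxy)
    (by rw [inf_comm]; exact hxz)

private theorem aux_add_disj (x y z : A) (hx : 0 ≤ x) (hy : 0 ≤ y) (hz : 0 ≤ z)
    (hyz : y ⊓ z = 0) : (x + y) ⊓ z = x ⊓ z := by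
  have h := aux_inf_subadd x y z hx hy hz
  rw [hyz, add_zero] at h
  refine le_antisymm h (le_inf ?_ inf_le_right)
  exact inf_le_left.trans (le_add_of_nonneg_right hy)

/-- positive part of difference of disjoint nonnegatives -/
private theorem aux_posPart (u v : A) (huv : u ⊓ v = 0) : (u - v) ⊔ 0 = u := by
  haveI := aux_swap (A := A)
  have h : (u - v) ⊔ 0 = u + ((-v) ⊔ (-u)) := by
    rw [add_sup, ← sub_eq_add_neg, add_neg_cancel]
  rw [h, ← neg_inf, inf_comm, huv, neg_zero, add_zero]

/-- disjoint nonnegatives multiply to zero -/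
private theorem aux_mul_zero
    (hfalg : ∀ f g h : A, f ⊓ g = 0 → 0 ≤ h → (f * h) ⊓ g = 0 ∧ (h * f) ⊓ g = 0)
    (p n : A) (hp : 0 ≤ p) (hn : 0 ≤ n) (hpn : p ⊓ n = 0) :
    p * n = 0 ∧ n * p = 0 := by
  constructor
  · have h1 : (p * n) ⊓ n = 0 := (hfalg p n n hpn hn).1
    have h2 := (hfalg n (p * n) p (by rw [inf_comm]; exact h1) hp).2
    rwa [inf_idem] at h2
  · have h1 : (n * p) ⊓ n = 0 := (hfalg p n n hpn hn).2
    have h2 := (hfalg n (n * p) p (by rw [inf_comm]; exact h1) hp).1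
    rwa [inf_idem] at h2

/-- cube of a difference with vanishing cross products -/
private theorem aux_cube (x y : A) (h1 : x * y = 0) (h2 : y * x = 0) :
    (x - y) ^ 3 = x ^ 3 - y ^ 3 := by
  have e2 : (x - y) * (x - y) = x * x + y * y := by
    rw [sub_mul, mul_sub, mul_sub, h1, h2]
    abel
  have e3 : (x - y) ^ 3 = ((x - y) * (x - y)) * (x - y) := by
    rw [pow_succ, sq]
  rw [e3, e2, add_mul, mul_sub, mul_sub, mul_assoc x x y, h1, mul_assoc y y x, h2,
    mul_zero, mul_zero, sub_zero, zero_sub]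
  have : x ^ 3 = x * x * x := by rw [pow_succ, sq]
  rw [this]
  have : y ^ 3 = y * y * y := by rw [pow_succ, sq]
  rw [this]
  abel

end Aux

/-- In a semiprime Archimedean f-algebra, `a⁻b⁻` is disjoint from
`z = (a + a³)⁺ + (b + b³)⁺`, and consequently `(ab)⁺ ⊓ z = a⁺b⁺ ⊓ z`. -/
theorem negPart_mul_negPart_disjoint
    {A : Type*} [Ring A] [Lattice A] [CovariantClass A A (· + ·) (· ≤ ·)]
    (hmulpos : ∀ x y : A, 0 ≤ x → 0 ≤ y → 0 ≤ x * y)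
    (hfalg : ∀ f g h : A, f ⊓ g = 0 → 0 ≤ h → (f * h) ⊓ g = 0 ∧ (h * f) ⊓ g = 0)
    (hsemiprime : ∀ a : A, (∃ n : ℕ, 0 < n ∧ a ^ n = 0) → a = 0)
    (harch : ∀ x y : A, (∀ n : ℕ, n • x ≤ y) → x ≤ 0)
    (a b : A) :
    ((((-a) ⊔ 0) * ((-b) ⊔ 0)) ⊓ (((a + a ^ 3) ⊔ 0) + ((b + b ^ 3) ⊔ 0)) = 0) ∧
      (((a * b) ⊔ 0) ⊓ (((a + a ^ 3) ⊔ 0) + ((b + b ^ 3) ⊔ 0))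
        = ((a ⊔ 0) * (b ⊔ 0)) ⊓ (((a + a ^ 3) ⊔ 0) + ((b + b ^ 3) ⊔ 0))) := by
  haveI := aux_swap (A := A)
  set p := a ⊔ 0 with hpdef
  set n := (-a) ⊔ 0 with hndef
  set q := b ⊔ 0 with hqdef
  set m := (-b) ⊔ 0 with hmdef
  have hp0 : (0 : A) ≤ p := le_sup_right
  have hn0 : (0 : A) ≤ n := le_sup_right
  have hq0 : (0 : A) ≤ q := le_sup_right
  have hm0 : (0 : A) ≤ m := le_sup_right
  have hpn : p ⊓ n = 0 := by
    simpa [posPart_def, negPart_def, hpdef, hndef] using posPart_inf_negPart_eq_zero a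
  have hqm : q ⊓ m = 0 := by
    simpa [posPart_def, negPart_def, hqdef, hmdef] using posPart_inf_negPart_eq_zero b
  have hnp : n ⊓ p = 0 := by rw [inf_comm]; exact hpn
  have hmq : m ⊓ q = 0 := by rw [inf_comm]; exact hqm
  have ha : a = p - n := by
    simpa [posPart_def, negPart_def, hpdef, hndef] using (posPart_sub_negPart a).symm
  have hb : b = q - m := by
    simpa [posPart_def, negPart_def, hqdef, hmdef] using (posPart_sub_negPart b).symm
  have hpnz := aux_mul_zero hfalg p n hp0 hn0 hpn
  have hqmz := aux_mul_zero hfalg q m hq0 hm0 hqm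
  -- cube disjointness facts
  have cubes : ∀ x y : A, 0 ≤ x → 0 ≤ y → x ⊓ y = 0 →
      (x + x ^ 3) ⊓ (y + y ^ 3) = 0 := by
    intro x y hx hy hxy
    have hyx : y ⊓ x = 0 := by rw [inf_comm]; exact hxy
    have d1 : (x * x) ⊓ y = 0 := (hfalg x y x hxy hx).1
    have d2 : (x * x * x) ⊓ y = 0 := (hfalg (x * x) y x d1 hx).1
    have e1 : (y * y) ⊓ x = 0 := (hfalg y x y hyx hy).1
    have e2 : (y * y * y) ⊓ x = 0 := (hfalg (y * y) x y e1 hy).1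
    have f1 : (y * y) ⊓ (x * x * x) = 0 :=
      (hfalg y (x * x * x) y (by rw [inf_comm]; exact d2) hy).1
    have f2 : (y * y * y) ⊓ (x * x * x) = 0 :=
      (hfalg (y * y) (x * x * x) y f1 hy).1
    have hx3 : x ^ 3 = x * x * x := by rw [pow_succ, sq]
    have hy3 : y ^ 3 = y * y * y := by rw [pow_succ, sq]
    have hx30 : 0 ≤ x ^ 3 := by rw [hx3]; exact hmulpos _ _ (hmulpos _ _ hx hx) hx
    have hy30 : 0 ≤ y ^ 3 := by rw [hy3]; exact hmulpos _ _ (hmulpos _ _ hy hy) hy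
    refine aux_disj_add _ _ _ hx hx30 (add_nonneg hy hy30) ?_ ?_
    · refine aux_disj_add' _ _ _ hx hy hy30 hxy ?_
      rw [hy3, inf_comm]; exact e2
    · refine aux_disj_add' _ _ _ hx30 hy hy30 ?_ ?_
      · rw [hx3]; exact d2
      · rw [hx3, hy3, inf_comm]; exact f2
  have hppn : (p + p ^ 3) ⊓ (n + n ^ 3) = 0 := cubes p n hp0 hn0 hpn
  have hqqm : (q + q ^ 3) ⊓ (m + m ^ 3) = 0 := cubes q m hq0 hm0 hqm
  -- a + a^3 = (p + p^3) - (n + n^3)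
  have ha3 : a + a ^ 3 = (p + p ^ 3) - (n + n ^ 3) := by
    rw [ha, aux_cube p n hpnz.1 hpnz.2]; abel
  have hb3 : b + b ^ 3 = (q + q ^ 3) - (m + m ^ 3) := by
    rw [hb, aux_cube q m hqmz.1 hqmz.2]; abel
  have hz1 : (a + a ^ 3) ⊔ 0 = p + p ^ 3 := by rw [ha3]; exact aux_posPart _ _ hppn
  have hz2 : (b + b ^ 3) ⊔ 0 = q + q ^ 3 := by rw [hb3]; exact aux_posPart _ _ hqqm
  have hpow : ∀ x : A, 0 ≤ x → 0 ≤ x ^ 3 := fun x hx => by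
    rw [show x ^ 3 = x * x * x by rw [pow_succ, sq]]
    exact hmulpos _ _ (hmulpos _ _ hx hx) hx
  have hz10 : 0 ≤ p + p ^ 3 := add_nonneg hp0 (hpow p hp0)
  have hz20 : 0 ≤ q + q ^ 3 := add_nonneg hq0 (hpow q hq0)
  -- disjointness of n, m from the z-parts
  have hnz1 : n ⊓ (p + p ^ 3) = 0 := by
    refine le_antisymm ?_ (le_inf hn0 hz10)
    calc n ⊓ (p + p ^ 3) ≤ (n + n ^ 3) ⊓ (p + p ^ 3) :=
          inf_le_inf_right _ (le_add_of_nonneg_right (hpow n hn0))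
      _ = 0 := by rw [inf_comm]; exact hppn
  have hmz2 : m ⊓ (q + q ^ 3) = 0 := by
    refine le_antisymm ?_ (le_inf hm0 hz20)
    calc m ⊓ (q + q ^ 3) ≤ (m + m ^ 3) ⊓ (q + q ^ 3) :=
          inf_le_inf_right _ (le_add_of_nonneg_right (hpow m hm0))
      _ = 0 := by rw [inf_comm]; exact hqqm
  -- Part 1 : (n*m) disjoint from z
  have hnm0 : 0 ≤ n * m := hmulpos _ _ hn0 hm0
  have hnmz1 : (n * m) ⊓ (p + p ^ 3) = 0 := (hfalg n (p + p ^ 3) m hnz1 hm0).1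
  have hnmz2 : (n * m) ⊓ (q + q ^ 3) = 0 := (hfalg m (q + q ^ 3) n hmz2 hn0).2
  have part1 : (n * m) ⊓ (((a + a ^ 3) ⊔ 0) + ((b + b ^ 3) ⊔ 0)) = 0 := by
    rw [hz1, hz2]
    exact aux_disj_add' _ _ _ hnm0 hz10 hz20 hnmz1 hnmz2
  refine ⟨part1, ?_⟩
  -- Part 2
  have hab : a * b = (p * q + n * m) - (p * m + n * q) := by
    rw [ha, hb, sub_mul, mul_sub, mul_sub]; abel
  -- u ⊓ v = 0 for u = pq + nm, v = pm + nq
  have d1 : (p * q) ⊓ (p * m) = 0 := by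
    have h1 : (p * q) ⊓ m = 0 := (hfalg q m p hqm hp0).2
    have h2 : (p * m) ⊓ (p * q) = 0 :=
      (hfalg m (p * q) p (by rw [inf_comm]; exact h1) hp0).2
    rw [inf_comm]; exact h2
  have d2 : (p * q) ⊓ (n * q) = 0 := by
    have h1 : (p * q) ⊓ n = 0 := (hfalg p n q hpn hq0).1
    have h2 : (n * q) ⊓ (p * q) = 0 :=
      (hfalg n (p * q) q (by rw [inf_comm]; exact h1) hq0).1
    rw [inf_comm]; exact h2
  have d3 : (n * m) ⊓ (p * m) = 0 := by
    have h1 : (n * m) ⊓ p = 0 := (hfalg n p m hnp hm0).1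
    have h2 : (p * m) ⊓ (n * m) = 0 :=
      (hfalg p (n * m) m (by rw [inf_comm]; exact h1) hm0).1
    rw [inf_comm]; exact h2
  have d4 : (n * m) ⊓ (n * q) = 0 := by
    have h1 : (n * m) ⊓ q = 0 := (hfalg m q n hmq hn0).2
    have h2 : (n * q) ⊓ (n * m) = 0 :=
      (hfalg q (n * m) n (by rw [inf_comm]; exact h1) hn0).2
    rw [inf_comm]; exact h2
  have hpq0 : 0 ≤ p * q := hmulpos _ _ hp0 hq0
  have hpm0 : 0 ≤ p * m := hmulpos _ _ hp0 hm0
  have hnq0 : 0 ≤ n * q := hmulpos _ _ hn0 hq0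
  have huv : (p * q + n * m) ⊓ (p * m + n * q) = 0 := by
    refine aux_disj_add _ _ _ hpq0 hnm0 (add_nonneg hpm0 hnq0) ?_ ?_
    · exact aux_disj_add' _ _ _ hpq0 hpm0 hnq0 d1 d2
    · exact aux_disj_add' _ _ _ hnm0 hpm0 hnq0 d3 d4
  have habpos : (a * b) ⊔ 0 = p * q + n * m := by
    rw [hab]; exact aux_posPart _ _ huv
  rw [habpos, hz1, hz2]
  exact aux_add_disj _ _ _ hpq0 hnm0 (add_nonneg hz10 hz20)
    (by rw [← hz1, ← hz2] at *; exact part1)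
end
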